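/- arXiv:1502.02691 — 3 statements merged into one kernel-verified Lean document; each statement's English description precedes it below -/
import Mathlib

section
/- Every regular flow on a compact metric space admits a field of cross sections. -/
open Set Metric Filter Topology

universe u

def IsFlow {X : Type u} [TopologicalSpace X] (φ : ℝ → X → X) : Prop :=
  Continuous (fun p : ℝ × X => φ p.1 p.2) ∧ (∀ x, φ 0 x = x) ∧
    ∀ (s t : ℝ) (x : X), φ (s + t) x = φ s (φ t x)

def IsRegularFlow {X : Type u} [TopologicalSpace X] (φ : ℝ → X → X) : Prop :=
  IsFlow φ ∧ ∀ x : X, ∃ t : ℝ, φ t x ≠ x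

/-- `B_r(K)`, the closed `r`-neighborhood of a set `K`. -/
def ballSet {X : Type u} [PseudoMetricSpace X] (r : ℝ) (K : Set X) : Set X :=
  ⋃ z ∈ K, closedBall z r

/-- A field of compact sets: compact values, `x ∈ h x`, and semicontinuity. -/
def IsFieldOfCompactSets {X : Type u} [MetricSpace X] (h : X → Set X) : Prop :=
  (∀ x : X, IsCompact (h x)) ∧ (∀ x : X, x ∈ h x) ∧
    ∀ x : X, ∀ ε > (0 : ℝ), ∃ δ > (0 : ℝ), ∀ y : X, dist x y < δ → h y ⊆ ballSet ε (h x)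

def IsFieldOfNbhds {X : Type u} [MetricSpace X] (N : X → Set X) : Prop :=
  IsFieldOfCompactSets N ∧ ∃ r > (0 : ℝ), ∀ x : X, closedBall x r ⊆ N x

/-- `φ_I(h)`, the saturation of a field `h` by flow-times in `I`. -/
def flowSat {X : Type u} [TopologicalSpace X] (φ : ℝ → X → X) (I : Set ℝ) (h : X → Set X) :
    X → Set X :=
  fun x => {z | ∃ t ∈ I, ∃ y ∈ h x, z = φ t y}

def IsCrossSectionField {X : Type u} [MetricSpace X] (φ : ℝ → X → X) (H : X → Set X) : Prop :=
  IsFieldOfCompactSets H ∧ ∃ τ > (0 : ℝ),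
    IsFieldOfNbhds (flowSat φ (Icc (-τ) τ) H) ∧
    ∀ x : X, ∀ y ∈ H x, H x ∩ {z | ∃ t : ℝ, |t| ≤ τ ∧ z = φ t y} = {y}

def IsMonotonousField {X : Type u} [MetricSpace X] (φ : ℝ → X → X) (H : X → Set X) : Prop :=
  ∃ ε > (0 : ℝ), ∀ x : X, ∀ t ∈ Ioo (0 : ℝ) ε, H x ∩ H (φ t x) = ∅

def fieldTranspose {X : Type u} (h : X → Set X) : X → Set X := fun x => {y | x ∈ h y}

def IsSymmetricField {X : Type u} (h : X → Set X) : Prop := fieldTranspose h = h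

def IsLocallySymmetricField {X : Type u} [MetricSpace X] (h : X → Set X) : Prop :=
  ∃ δ > (0 : ℝ), IsSymmetricField (fun x => closedBall x δ ∩ h x)

/-- Continuity of a field with respect to the Hausdorff metric. -/
def IsContinuousField {X : Type u} [MetricSpace X] (h : X → Set X) : Prop :=
  ∀ x : X, ∀ ε > (0 : ℝ), ∃ δ > (0 : ℝ), ∀ y : X,
    dist x y < δ → hausdorffDist (h x) (h y) < ε

def IsExpansiveFlow {X : Type u} [MetricSpace X] (φ : ℝ → X → X) : Prop :=
  ∀ ε > (0 : ℝ), ∃ δ > (0 : ℝ), ∀ x y : X, ∀ h : ℝ → ℝ,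
    Continuous h → StrictMono h → Function.Surjective h → h 0 = 0 →
    (∀ t : ℝ, dist (φ (h t) y) (φ t x) < δ) → ∃ t ∈ Ioo (-ε) ε, y = φ t x

def IsPositiveExpansiveFlow {X : Type u} [MetricSpace X] (φ : ℝ → X → X) : Prop :=
  ∀ ε > (0 : ℝ), ∃ δ > (0 : ℝ), ∀ x y : X, ∀ h : ℝ → ℝ,
    ContinuousOn h (Ici 0) → StrictMonoOn h (Ici 0) → h 0 = 0 →
    MapsTo h (Ici 0) (Ici 0) → SurjOn h (Ici 0) (Ici 0) →
    (∀ t ≥ (0 : ℝ), dist (φ (h t) y) (φ t x) < δ) → ∃ t ∈ Ioo (-ε) ε, y = φ t x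

/-- A one-parameter family of cross sections as produced by Theorem `secContMonSym`
of the paper: jointly continuous (Hausdorff metric), with nonempty compact
connected values; each `H ε` (for `ε ∈ (0,r]`) is a continuous, monotonous,
locally symmetric field of cross sections; `H 0 x = {x}`; monotone in `ε`. -/
structure CrossSectionFamily {X : Type u} [MetricSpace X] (φ : ℝ → X → X) where
  r : ℝ
  r_pos : 0 < r
  H : ℝ → X → Set X
  compact : ∀ ε ∈ Icc (0 : ℝ) r, ∀ x : X, IsCompact (H ε x)
  connected : ∀ ε ∈ Icc (0 : ℝ) r, ∀ x : X, IsConnected (H ε x)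
  jointCont : ∀ ε ∈ Icc (0 : ℝ) r, ∀ x : X, ∀ η > (0 : ℝ), ∃ δ > (0 : ℝ),
    ∀ ε' ∈ Icc (0 : ℝ) r, ∀ y : X, |ε - ε'| < δ → dist x y < δ →
      hausdorffDist (H ε x) (H ε' y) < η
  cross : ∀ ε ∈ Ioc (0 : ℝ) r, IsCrossSectionField φ (H ε)
  monot : ∀ ε ∈ Ioc (0 : ℝ) r, IsMonotonousField φ (H ε)
  contField : ∀ ε ∈ Ioc (0 : ℝ) r, IsContinuousField (H ε)
  locSym : ∀ ε ∈ Ioc (0 : ℝ) r, IsLocallySymmetricField (H ε)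
  zero : ∀ x : X, H 0 x = {x}
  mono : ∀ ε ε' : ℝ, 0 ≤ ε → ε ≤ ε' → ε' ≤ r → ∀ x : X, H ε x ⊆ H ε' x

/-- The stable set `W^s` of `x` relative to a field of cross sections `Hε`. -/
def Wstable {X : Type u} [MetricSpace X] (φ : ℝ → X → X) (Hε : X → Set X) (x : X) : Set X :=
  {y | ∃ h : ℝ → ℝ, ContinuousOn h (Ici 0) ∧ StrictMonoOn h (Ici 0) ∧ h 0 = 0 ∧
    MapsTo h (Ici 0) (Ici 0) ∧ SurjOn h (Ici 0) (Ici 0) ∧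
    ∀ t ≥ (0 : ℝ), φ (h t) y ∈ Hε (φ t x)}

/-- The unstable set `W^u` of `x` relative to a field of cross sections `Hε`. -/
def Wunstable {X : Type u} [MetricSpace X] (φ : ℝ → X → X) (Hε : X → Set X) (x : X) : Set X :=
  {y | ∃ h : ℝ → ℝ, ContinuousOn h (Iic 0) ∧ StrictMonoOn h (Iic 0) ∧ h 0 = 0 ∧
    MapsTo h (Iic 0) (Iic 0) ∧ SurjOn h (Iic 0) (Iic 0) ∧
    ∀ t ≤ (0 : ℝ), φ (h t) y ∈ Hε (φ t x)}

def IsStablePoint {X : Type u} [MetricSpace X] (φ : ℝ → X → X) (F : CrossSectionFamily φ)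
    (x : X) : Prop :=
  ∀ ε ∈ Ioc (0 : ℝ) F.r, ∃ δ ∈ Ioc (0 : ℝ) F.r, F.H δ x ⊆ Wstable φ (F.H ε) x

/-- `Φ_t(x,S)`: the image of `S` under the sectional flow over `x` at time `t ≥ 0`. -/
def secImage {X : Type u} [MetricSpace X] (φ : ℝ → X → X) (Hd : X → Set X) (x : X)
    (S : Set X) (t : ℝ) : Set X :=
  {z | ∃ y ∈ S, ∃ g : ℝ → ℝ, ContinuousOn g (Ici 0) ∧ g 0 = 0 ∧
    (∀ s ≥ (0 : ℝ), φ (g s) y ∈ Hd (φ s x)) ∧ z = φ (g t) y}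

/-- `Φ_t(x,C)` for the sectional flow defined on the time interval `[0,s]`. -/
def secImageOn {X : Type u} [MetricSpace X] (φ : ℝ → X → X) (Hd : X → Set X) (x : X)
    (C : Set X) (s t : ℝ) : Set X :=
  {z | ∃ y ∈ C, ∃ g : ℝ → ℝ, ContinuousOn g (Icc 0 s) ∧ g 0 = 0 ∧
    (∀ u ∈ Icc (0 : ℝ) s, φ (g u) y ∈ Hd (φ u x)) ∧ z = φ (g t) y}

def IsOneParamNbhdField {X : Type u} [MetricSpace X] (N : ℝ → X → Set X) : Prop :=
  (∀ p ∈ Icc (0 : ℝ) 1, ∀ x : X, IsCompact (N p x) ∧ (N p x).Nonempty) ∧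
  (∀ p ∈ Icc (0 : ℝ) 1, ∀ x : X, ∀ η > (0 : ℝ), ∃ δ > (0 : ℝ), ∀ q ∈ Icc (0 : ℝ) 1, ∀ y : X,
      |p - q| < δ → dist x y < δ → hausdorffDist (N p x) (N q y) < η) ∧
  (∀ p ∈ Ioc (0 : ℝ) 1, IsFieldOfNbhds (N p)) ∧
  (∀ x : X, N 0 x = {x}) ∧ (∀ x : X, N 1 x = univ)

/-- `ℤ`-iterates of a homeomorphism. -/
def homeoIter {X : Type u} [TopologicalSpace X] (f : X ≃ₜ X) : ℤ → X → X
  | Int.ofNat n => (⇑f)^[n]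
  | Int.negSucc n => (⇑f.symm)^[n + 1]

def IsExpansiveHomeo {X : Type u} [MetricSpace X] (f : X ≃ₜ X) : Prop :=
  ∃ c > (0 : ℝ), ∀ x y : X, (∀ n : ℤ, dist (homeoIter f n x) (homeoIter f n y) ≤ c) → x = y


section CrossSectionProof

open Filter MeasureTheory intervalIntegral

set_option linter.unusedSectionVars false

variable {X : Type u} [MetricSpace X] [CompactSpace X] {φ : ℝ → X → X}

private lemma flow_iter (hφ : IsFlow φ) {p : ℝ} {y : X} (hp : φ p y = y) :
    ∀ k : ℕ, φ ((k : ℝ) * p) y = y := by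
  intro k
  induction k with
  | zero => simpa using hφ.2.1 y
  | succ n ih =>
      have h : ((n : ℝ) + 1) * p = p + (n : ℝ) * p := by ring
      rw [Nat.cast_succ, h, hφ.2.2, ih, hp]

private lemma exists_pos_lambda (hφ : IsRegularFlow φ) : ∃ l > (0 : ℝ), ∀ x : X, φ l x ≠ x := by
  by_contra hcon
  push_neg at hcon
  have h : ∀ n : ℕ, ∃ x : X, φ (1 / 2 ^ n) x = x := by
    intro n
    obtain ⟨x, hx⟩ := hcon (1 / 2 ^ n) (by positivity)
    exact ⟨x, hx⟩
  choose g hg using h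
  obtain ⟨x, -, σ, hσ, hconv⟩ := isCompact_univ.tendsto_subseq (fun n => mem_univ (g n))
  have hfix0 : ∀ t : ℝ, 0 ≤ t → φ t x = x := by
    intro t ht
    have key : ∀ n : ℕ, φ (((⌊t * 2 ^ σ n⌋ : ℤ) : ℝ) / 2 ^ σ n) (g (σ n)) = g (σ n) := by
      intro n
      have hfl : (0 : ℤ) ≤ ⌊t * 2 ^ σ n⌋ := Int.floor_nonneg.2 (by positivity)
      have hc2 : ((⌊t * 2 ^ σ n⌋ : ℤ) : ℝ) / 2 ^ σ n
          = ((⌊t * 2 ^ σ n⌋.toNat : ℕ) : ℝ) * (1 / 2 ^ σ n) := by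
        rw [mul_one_div]
        congr 1
        exact_mod_cast (Int.toNat_of_nonneg hfl).symm
      rw [hc2]
      exact flow_iter hφ.1 (hg (σ n)) _
    set u : ℕ → ℝ := fun n => ((⌊t * 2 ^ σ n⌋ : ℤ) : ℝ) / 2 ^ σ n with hu
    have hdist : ∀ n, dist (u n) t ≤ 1 / 2 ^ n := by
      intro n
      have h2 : (0 : ℝ) < 2 ^ σ n := by positivity
      have h3 : ((⌊t * 2 ^ σ n⌋ : ℤ) : ℝ) ≤ t * 2 ^ σ n := Int.floor_le _
      have h4 : t * 2 ^ σ n < ((⌊t * 2 ^ σ n⌋ : ℤ) : ℝ) + 1 := Int.lt_floor_add_one _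
      have h6 : (2 : ℝ) ^ n ≤ 2 ^ σ n := pow_le_pow_right₀ (by norm_num) hσ.le_apply
      have h7 : (0 : ℝ) < 2 ^ n := by positivity
      have e1 : u n - t = (((⌊t * 2 ^ σ n⌋ : ℤ) : ℝ) - t * 2 ^ σ n) / 2 ^ σ n := by
        rw [hu]
        field_simp
      rw [Real.dist_eq, e1, abs_div, abs_of_pos h2]
      have habs : |((⌊t * 2 ^ σ n⌋ : ℤ) : ℝ) - t * 2 ^ σ n| ≤ 1 :=
        abs_le.2 ⟨by linarith, by linarith⟩
      calc |((⌊t * 2 ^ σ n⌋ : ℤ) : ℝ) - t * 2 ^ σ n| / 2 ^ σ n ≤ 1 / 2 ^ σ n := by gcongr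
        _ ≤ 1 / 2 ^ n := by gcongr
    have hut : Tendsto u atTop (𝓝 t) := by
      rw [tendsto_iff_dist_tendsto_zero]
      apply squeeze_zero (fun n => dist_nonneg) hdist
      have := tendsto_pow_atTop_nhds_zero_of_lt_one (by norm_num : (0:ℝ) ≤ 1/2)
        (by norm_num : (1:ℝ)/2 < 1)
      refine this.congr fun n => ?_
      rw [div_pow, one_pow]
    have h1 : Tendsto (fun n => φ (u n) (g (σ n))) atTop (𝓝 (φ t x)) :=
      (hφ.1.1.tendsto (t, x)).comp (hut.prodMk_nhds hconv)
    have h2 : Tendsto (fun n => φ (u n) (g (σ n))) atTop (𝓝 x) := by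
      apply hconv.congr
      intro n
      exact (key n).symm
    exact tendsto_nhds_unique h1 h2
  have hfixall : ∀ t : ℝ, φ t x = x := by
    intro t
    rcases le_or_gt 0 t with h | h
    · exact hfix0 t h
    · have h1 : φ (-t) x = x := hfix0 (-t) (by linarith)
      calc φ t x = φ t (φ (-t) x) := by rw [h1]
        _ = φ (t + -t) x := (hφ.1.2.2 t (-t) x).symm
        _ = x := by rw [add_neg_cancel, hφ.1.2.1]
  obtain ⟨t, hne⟩ := hφ.2 x
  exact hne (hfixall t)

private lemma mem_ballSet_of {ε : ℝ} {K : Set X} {w z : X} (hw : w ∈ K) (h : dist z w ≤ ε) :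
    z ∈ ballSet ε K := mem_biUnion hw (Metric.mem_closedBall.2 h)

private lemma usc_of_closed_graph {S : X → Set X}
    (hcl : IsClosed {p : X × X | p.2 ∈ S p.1}) :
    ∀ x : X, ∀ ε > (0 : ℝ), ∃ δ > (0 : ℝ), ∀ y : X, dist x y < δ → S y ⊆ ballSet ε (S x) := by
  intro x ε hε
  by_contra hcon
  push_neg at hcon
  have h : ∀ n : ℕ, ∃ y z : X, dist x y < 1 / (n + 1) ∧ z ∈ S y ∧ z ∉ ballSet ε (S x) := by
    intro n
    obtain ⟨y, hy, hns⟩ := hcon (1 / (n + 1)) (by positivity)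
    obtain ⟨z, hz1, hz2⟩ := not_subset.1 hns
    exact ⟨y, z, hy, hz1, hz2⟩
  choose y z hy hz1 hz2 using h
  obtain ⟨w, -, σ, hσ, hconv⟩ := isCompact_univ.tendsto_subseq (fun n => mem_univ (z n))
  have hyx : Tendsto (fun n => y (σ n)) atTop (𝓝 x) := by
    rw [tendsto_iff_dist_tendsto_zero]
    apply squeeze_zero (fun n => dist_nonneg) (g := fun n : ℕ => 1 / (n + 1))
    · intro n
      rw [dist_comm]
      refine le_of_lt (lt_of_lt_of_le (hy (σ n)) ?_)
      have h8 : (n : ℝ) ≤ (σ n : ℝ) := by exact_mod_cast hσ.le_apply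
      apply one_div_le_one_div_of_le (by positivity)
      linarith
    · exact tendsto_one_div_add_atTop_nhds_zero_nat
  have hwS : w ∈ S x :=
    hcl.mem_of_tendsto (hyx.prodMk_nhds hconv) (Eventually.of_forall fun n => hz1 (σ n))
  obtain ⟨N, hN⟩ := Metric.tendsto_atTop.1 hconv ε hε
  exact hz2 (σ N) (mem_ballSet_of hwS (hN N le_rfl).le)

end CrossSectionProof

open MeasureTheory intervalIntegral in
/-- Every regular flow on a compact metric space admits a field of cross sections. -/
theorem stmt0 {X : Type u} [MetricSpace X] [CompactSpace X] (φ : ℝ → X → X)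
    (hφ : IsRegularFlow φ) :
    ∃ H : X → Set X, IsCrossSectionField φ H := by
  classical
  cases isEmpty_or_nonempty X with
  | inl hX =>
      exact ⟨fun x => {x}, ⟨fun x => hX.elim x, fun x => hX.elim x, fun x => hX.elim x⟩,
        1, one_pos, ⟨⟨fun x => hX.elim x, fun x => hX.elim x, fun x => hX.elim x⟩,
          1, one_pos, fun x => hX.elim x⟩, fun x => hX.elim x⟩
  | inr hX =>
      obtain ⟨l, hl, hlx⟩ := exists_pos_lambda hφ
      have hc : Continuous fun p : ℝ × X => φ p.1 p.2 := hφ.1.1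
      have h0 : ∀ x : X, φ 0 x = x := hφ.1.2.1
      have hadd : ∀ (s t : ℝ) (x : X), φ (s + t) x = φ s (φ t x) := hφ.1.2.2
      have hct : ∀ y : X, Continuous fun s : ℝ => φ s y := fun y =>
        hc.comp (continuous_id.prodMk continuous_const)
      have hcx : ∀ t : ℝ, Continuous fun y : X => φ t y := fun t =>
        hc.comp (continuous_const.prodMk continuous_id)
      -- minimal displacement at time l
      obtain ⟨x₀, -, hx₀m⟩ := isCompact_univ.exists_isMinOn univ_nonempty
        (((hcx l).dist continuous_id).continuousOn)
      have hx₀ : ∀ x : X, dist (φ l x₀) x₀ ≤ dist (φ l x) x := fun x => hx₀m (mem_univ x)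
      set a : ℝ := dist (φ l x₀) x₀ with ha
      have hapos : 0 < a := dist_pos.2 (hlx x₀)
      -- the function G
      set G : ℝ × X × X → ℝ := fun p =>
        dist (φ (p.1 + l) p.2.2) p.2.1 - dist (φ p.1 p.2.2) p.2.1
          - dist (φ (p.1 + l) p.2.2) (φ l p.2.1) + dist (φ p.1 p.2.2) (φ l p.2.1) with hG
      have c1 : Continuous fun p : ℝ × X × X => φ (p.1 + l) p.2.2 :=
        hc.comp ((continuous_fst.add continuous_const).prodMk continuous_snd.snd)
      have c2 : Continuous fun p : ℝ × X × X => φ p.1 p.2.2 :=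
        hc.comp (continuous_fst.prodMk continuous_snd.snd)
      have c3 : Continuous fun p : ℝ × X × X => φ l p.2.1 := (hcx l).comp continuous_snd.fst
      have hGcont : Continuous G :=
        (((c1.dist continuous_snd.fst).sub (c2.dist continuous_snd.fst)).sub
          (c1.dist c3)).add (c2.dist c3)
      -- G is at least a near the diagonal at time 0
      obtain ⟨δB, hδB, hB⟩ : ∃ δ > (0 : ℝ), ∀ (s : ℝ) (x y : X),
          |s| < δ → dist y x < δ → a < G (s, x, y) := by
        have hKcomp : IsCompact ((fun x : X => ((0 : ℝ), x, x)) '' univ) :=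
          isCompact_univ.image (continuous_const.prodMk (continuous_id.prodMk continuous_id))
        have hUopen : IsOpen {p : ℝ × X × X | a < G p} := isOpen_lt continuous_const hGcont
        have hKU : (fun x : X => ((0 : ℝ), x, x)) '' univ ⊆ {p : ℝ × X × X | a < G p} := by
          rintro p ⟨x, -, rfl⟩
          have hGval : G (0, x, x) = 2 * dist (φ l x) x := by
            simp only [hG, zero_add, h0, dist_self]
            rw [dist_comm x (φ l x)]
            ring
          simp only [mem_setOf_eq, hGval]
          have := hx₀ x
          linarith
        obtain ⟨δ, hδ, hth⟩ := hKcomp.exists_thickening_subset_open hUopen hKU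
        refine ⟨δ, hδ, fun s x y hs hxy => ?_⟩
        have hmem : (s, x, y) ∈ Metric.thickening δ ((fun x : X => ((0 : ℝ), x, x)) '' univ) := by
          rw [Metric.mem_thickening_iff]
          refine ⟨(0, x, x), ⟨x, mem_univ x, rfl⟩, ?_⟩
          rw [Prod.dist_eq, Prod.dist_eq, Real.dist_eq, sub_zero, dist_self]
          exact max_lt hs (max_lt hδ hxy)
        exact hth hmem
      -- the function V
      set V : X → X → ℝ := fun x y =>
        ∫ s in (0 : ℝ)..l, (dist (φ s y) x - dist (φ s y) (φ l x)) with hV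
      have hVcont : Continuous fun p : X × X => V p.1 p.2 := by
        have d1 : Continuous fun q : (X × X) × ℝ => φ q.2 q.1.2 :=
          hc.comp (continuous_snd.prodMk continuous_fst.snd)
        have d2 : Continuous fun q : (X × X) × ℝ => φ l q.1.1 :=
          (hcx l).comp continuous_fst.fst
        have huc : Continuous (Function.uncurry fun (p : X × X) (s : ℝ) =>
            dist (φ s p.2) p.1 - dist (φ s p.2) (φ l p.1)) :=
          (d1.dist continuous_fst.fst).sub (d1.dist d2)
        exact continuous_parametric_intervalIntegral_of_continuous' huc 0 l
      have hVx : ∀ x : X, Continuous fun y : X => V x y := fun x =>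
        hVcont.comp (continuous_const.prodMk continuous_id)
      have hFc : ∀ x y : X, Continuous fun s : ℝ => dist (φ s y) x - dist (φ s y) (φ l x) :=
        fun x y => ((hct y).dist continuous_const).sub ((hct y).dist continuous_const)
      -- key monotonicity estimate
      have hmono : ∀ x y : X, dist y x ≤ δB / 2 → ∀ t' t : ℝ, -(δB / 2) ≤ t' → t' ≤ t →
          t ≤ δB / 2 → V x (φ t' y) + a * (t - t') ≤ V x (φ t y) := by
        intro x y hxy t' t h1 h2 h3
        set F : ℝ → ℝ := fun s => dist (φ s y) x - dist (φ s y) (φ l x) with hF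
        have hFint : ∀ p q : ℝ, IntervalIntegrable F volume p q :=
          fun p q => (hFc x y).intervalIntegrable p q
        have hFlint : ∀ p q : ℝ, IntervalIntegrable (fun s => F (s + l)) volume p q :=
          fun p q => ((hFc x y).comp (continuous_id.add continuous_const)).intervalIntegrable p q
        have key : ∀ u : ℝ, V x (φ u y) = ∫ s in u..(u + l), F s := by
          intro u
          have hs : ∀ s : ℝ, φ s (φ u y) = φ (s + u) y := fun s => (hadd s u y).symm
          have e0 : V x (φ u y) = ∫ s in (0:ℝ)..l, F (s + u) := by
            rw [hV]
            simp only [hs, hF]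
          rw [e0, integral_comp_add_right F u, zero_add, add_comm l u]
        have e1 : (∫ s in t'..t, F (s + l)) = ∫ s in (t' + l)..(t + l), F s :=
          integral_comp_add_right F l
        have e2 : (∫ s in t'..(t' + l), F s) + ∫ s in (t' + l)..(t + l), F s
            = ∫ s in t'..(t + l), F s := integral_add_adjacent_intervals (hFint _ _) (hFint _ _)
        have e3 : (∫ s in t'..t, F s) + ∫ s in t..(t + l), F s
            = ∫ s in t'..(t + l), F s := integral_add_adjacent_intervals (hFint _ _) (hFint _ _)
        have e4 : V x (φ t y) - V x (φ t' y) = ∫ s in t'..t, (F (s + l) - F s) := by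
          rw [key, key, integral_sub (hFlint _ _) (hFint _ _), e1]
          linarith
        have hbound : (∫ s in t'..t, (a : ℝ)) ≤ ∫ s in t'..t, (F (s + l) - F s) := by
          apply integral_mono_on h2 (intervalIntegrable_const)
            ((hFlint _ _).sub (hFint _ _))
          intro s hs
          have hsabs : |s| < δB := by
            rw [abs_lt]
            constructor
            · have := hs.1; linarith
            · have := hs.2; linarith
          have hxy' : dist y x < δB := by linarith
          have := hB s x y hsabs hxy'
          have hGF : F (s + l) - F s = G (s, x, y) := by
            simp only [hF, hG]
            ring
          linarith [hGF ▸ this]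
        rw [intervalIntegral.integral_const, smul_eq_mul] at hbound
        have := e4 ▸ hbound
        nlinarith [this]
      -- small-time displacement bound
      obtain ⟨δC, hδC, hC⟩ : ∃ δ > (0 : ℝ), ∀ (t : ℝ) (z : X),
          |t| < δ → dist (φ t z) z < δB / 4 := by
        have hKcomp : IsCompact ((fun z : X => ((0 : ℝ), z)) '' univ) :=
          isCompact_univ.image (continuous_const.prodMk continuous_id)
        have hUopen : IsOpen {p : ℝ × X | dist (φ p.1 p.2) p.2 < δB / 4} :=
          isOpen_lt (hc.dist continuous_snd) continuous_const
        have hKU : (fun z : X => ((0 : ℝ), z)) '' univ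
            ⊆ {p : ℝ × X | dist (φ p.1 p.2) p.2 < δB / 4} := by
          rintro p ⟨z, -, rfl⟩
          simp only [mem_setOf_eq, h0, dist_self]
          linarith
        obtain ⟨δ, hδ, hth⟩ := hKcomp.exists_thickening_subset_open hUopen hKU
        refine ⟨δ, hδ, fun t z htz => ?_⟩
        have hmem : (t, z) ∈ Metric.thickening δ ((fun z : X => ((0 : ℝ), z)) '' univ) := by
          rw [Metric.mem_thickening_iff]
          refine ⟨(0, z), ⟨z, mem_univ z, rfl⟩, ?_⟩
          rw [Prod.dist_eq, Real.dist_eq, sub_zero, dist_self]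
          exact max_lt htz hδ
        exact hth hmem
      set τ : ℝ := min (δB / 2) (δC / 2) with hτdef
      have hτpos : 0 < τ := lt_min (by linarith) (by linarith)
      have hτ1 : τ ≤ δB / 2 := min_le_left _ _
      have hτ2 : τ ≤ δC / 2 := min_le_right _ _
      -- closeness of V values near the diagonal
      obtain ⟨δV, hδV, hVc⟩ : ∃ δ > (0 : ℝ), ∀ x z : X,
          dist z x < δ → |V x z - V x x| < a * τ := by
        have hKcomp : IsCompact ((fun x : X => (x, x)) '' univ) :=
          isCompact_univ.image (continuous_id.prodMk continuous_id)
        have hcont2 : Continuous fun p : X × X => |V p.1 p.2 - V p.1 p.1| :=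
          (hVcont.sub (hVcont.comp (continuous_fst.prodMk continuous_fst))).abs
        have hUopen : IsOpen {p : X × X | |V p.1 p.2 - V p.1 p.1| < a * τ} :=
          isOpen_lt hcont2 continuous_const
        have hKU : (fun x : X => (x, x)) '' univ
            ⊆ {p : X × X | |V p.1 p.2 - V p.1 p.1| < a * τ} := by
          rintro p ⟨x, -, rfl⟩
          simp only [mem_setOf_eq, sub_self, abs_zero]
          positivity
        obtain ⟨δ, hδ, hth⟩ := hKcomp.exists_thickening_subset_open hUopen hKU
        refine ⟨δ, hδ, fun x z hxz => ?_⟩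
        have hmem : (x, z) ∈ Metric.thickening δ ((fun x : X => (x, x)) '' univ) := by
          rw [Metric.mem_thickening_iff]
          refine ⟨(x, x), ⟨x, mem_univ x, rfl⟩, ?_⟩
          rw [Prod.dist_eq, dist_self]
          exact max_lt hδ hxz
        exact hth hmem
      set r : ℝ := min (δB / 4) (δV / 2) with hrdef
      have hrpos : 0 < r := lt_min (by linarith) (by linarith)
      -- the field of cross sections
      set H : X → Set X := fun x => {y | dist y x ≤ δB / 2 ∧ V x y = V x x} with hH
      have hHmem : ∀ x : X, x ∈ H x := fun x => ⟨by rw [dist_self]; linarith, rfl⟩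
      have hHgraph : IsClosed {p : X × X | p.2 ∈ H p.1} := by
        have : {p : X × X | p.2 ∈ H p.1}
            = {p : X × X | dist p.2 p.1 ≤ δB / 2} ∩ {p : X × X | V p.1 p.2 = V p.1 p.1} := rfl
        rw [this]
        exact (isClosed_le (continuous_snd.dist continuous_fst) continuous_const).inter
          (isClosed_eq hVcont (hVcont.comp (continuous_fst.prodMk continuous_fst)))
      have hHclosed : ∀ x : X, IsClosed (H x) := fun x =>
        (isClosed_le (continuous_id.dist continuous_const) continuous_const).inter
          (isClosed_eq (hVx x) continuous_const)
      have hHcomp : ∀ x : X, IsCompact (H x) := fun x => (hHclosed x).isCompact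
      set N : X → Set X := flowSat φ (Icc (-τ) τ) H with hN
      have hNmem : ∀ x z : X, z ∈ N x ↔ ∃ t ∈ Icc (-τ) τ, ∃ y ∈ H x, z = φ t y := by
        intro x z
        rfl
      have hNgraph : IsClosed {p : X × X | p.2 ∈ N p.1} := by
        apply IsSeqClosed.isClosed
        intro pn p hpn hplim
        have hpn' : ∀ n, ∃ t ∈ Icc (-τ) τ, ∃ y ∈ H (pn n).1, (pn n).2 = φ t y := hpn
        choose t ht y hy hz using hpn'
        obtain ⟨q, hq, σ, hσ, hconv⟩ := (isCompact_Icc.prod isCompact_univ).tendsto_subseq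
          (x := fun n => (t n, y n)) (fun n => ⟨ht n, mem_univ (y n)⟩)
        have hq1 : q.1 ∈ Icc (-τ) τ := hq.1
        have hconv1 : Filter.Tendsto (fun n => t (σ n)) Filter.atTop (𝓝 q.1) :=
          (continuous_fst.tendsto q).comp hconv
        have hconv2 : Filter.Tendsto (fun n => y (σ n)) Filter.atTop (𝓝 q.2) :=
          (continuous_snd.tendsto q).comp hconv
        have hp1 : Filter.Tendsto (fun n => (pn (σ n)).1) Filter.atTop (𝓝 p.1) :=
          ((continuous_fst.tendsto p).comp hplim).comp hσ.tendsto_atTop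
        have hp2 : Filter.Tendsto (fun n => (pn (σ n)).2) Filter.atTop (𝓝 p.2) :=
          ((continuous_snd.tendsto p).comp hplim).comp hσ.tendsto_atTop
        have hyH : q.2 ∈ H p.1 := by
          have := hHgraph.mem_of_tendsto (hp1.prodMk_nhds hconv2)
            (Filter.Eventually.of_forall fun n => hy (σ n))
          exact this
        have heq : p.2 = φ q.1 q.2 := by
          have h1 : Filter.Tendsto (fun n => φ (t (σ n)) (y (σ n))) Filter.atTop
              (𝓝 (φ q.1 q.2)) := (hc.tendsto (q.1, q.2)).comp (hconv1.prodMk_nhds hconv2)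
          have h2 : Filter.Tendsto (fun n => φ (t (σ n)) (y (σ n))) Filter.atTop (𝓝 p.2) := by
            apply hp2.congr
            intro n
            exact hz (σ n)
          exact (tendsto_nhds_unique h2 h1)
        exact ⟨q.1, hq1, q.2, hyH, heq⟩
      have hNcomp : ∀ x : X, IsCompact (N x) := by
        intro x
        have him : N x = (fun q : ℝ × X => φ q.1 q.2) '' (Icc (-τ) τ ×ˢ H x) := by
          ext z
          rw [hNmem]
          constructor
          · rintro ⟨t, ht, y, hy, rfl⟩
            exact ⟨(t, y), ⟨ht, hy⟩, rfl⟩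
          · rintro ⟨⟨t, y⟩, ⟨ht, hy⟩, rfl⟩
            exact ⟨t, ht, y, hy, rfl⟩
        rw [him]
        exact (isCompact_Icc.prod (hHcomp x)).image hc
      have hNselfmem : ∀ x : X, x ∈ N x := fun x =>
        ⟨0, ⟨by linarith, by linarith⟩, x, hHmem x, (h0 x).symm⟩
      -- the τ-saturation of H contains uniform balls
      have hball : ∀ x : X, closedBall x r ⊆ N x := by
        intro x z hz
        rw [Metric.mem_closedBall] at hz
        have hzρ : dist z x ≤ δB / 2 := le_trans hz (by
          have : r ≤ δB / 4 := min_le_left _ _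
          linarith)
        have hWcont : Continuous fun t : ℝ => V x (φ t z) :=
          (hVx x).comp (hct z)
        have hW0 : |V x z - V x x| < a * τ := hVc x z (lt_of_le_of_lt hz (by
          have : r ≤ δV / 2 := min_le_right _ _
          linarith))
        have habs := abs_lt.1 hW0
        have hWτ : V x (φ 0 z) + a * τ ≤ V x (φ τ z) := by
          have := hmono x z hzρ 0 τ (by linarith) hτpos.le hτ1
          simpa using this
        have hWmτ : V x (φ (-τ) z) + a * τ ≤ V x (φ 0 z) := by
          have := hmono x z hzρ (-τ) 0 (by linarith) (by linarith) (by linarith)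
          simpa using this
        rw [h0] at hWτ hWmτ
        have hiv : V x x ∈ Icc (V x (φ (-τ) z)) (V x (φ τ z)) := by
          constructor
          · linarith
          · linarith
        obtain ⟨t, htI, htW⟩ := intermediate_value_Icc (by linarith : -τ ≤ τ)
          hWcont.continuousOn hiv
        have htabs : |t| ≤ τ := abs_le.2 ⟨htI.1, htI.2⟩
        have hyH : φ t z ∈ H x := by
          constructor
          · have h1 : dist (φ t z) z < δB / 4 := hC t z (lt_of_le_of_lt htabs (by linarith))
            have h2 : dist z x ≤ δB / 4 := le_trans hz (min_le_left _ _)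
            calc dist (φ t z) x ≤ dist (φ t z) z + dist z x := dist_triangle _ _ _
              _ ≤ δB / 2 := by linarith
          · exact htW
        refine ⟨-t, ⟨by linarith [abs_le.1 htabs], by linarith [(abs_le.1 htabs).1]⟩,
          φ t z, hyH, ?_⟩
        rw [← hadd, neg_add_cancel, h0]
      -- the section uniqueness property
      have huniq : ∀ x : X, ∀ y ∈ H x,
          H x ∩ {z | ∃ t : ℝ, |t| ≤ τ ∧ z = φ t y} = {y} := by
        intro x y hyH
        apply Subset.antisymm
        · rintro z ⟨hzH, t, htle, rfl⟩
          have habs := abs_le.1 htle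
          rcases lt_trichotomy t 0 with hneg | hzero | hpos
          · exfalso
            have := hmono x y hyH.1 t 0 (by linarith) hneg.le (by linarith)
            rw [h0] at this
            have e1 : V x (φ t y) = V x x := hzH.2
            have e2 : V x y = V x x := hyH.2
            nlinarith
          · rw [mem_singleton_iff, hzero, h0]
          · exfalso
            have := hmono x y hyH.1 0 t (by linarith) hpos.le (by linarith)
            rw [h0] at this
            have e1 : V x (φ t y) = V x x := hzH.2
            have e2 : V x y = V x x := hyH.2
            nlinarith
        · rintro z hzy
          rw [mem_singleton_iff] at hzy
          subst hzy
          exact ⟨hyH, 0, by rw [abs_zero]; linarith, (h0 z).symm⟩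
      -- assemble everything
      refine ⟨H, ⟨hHcomp, hHmem, usc_of_closed_graph hHgraph⟩, τ, hτpos,
        ⟨⟨hNcomp, hNselfmem, usc_of_closed_graph hNgraph⟩, r, hrpos, hball⟩, huniq⟩
end

section
/- Every regular flow on a compact metric space admits a monotonous field of cross sections. -/
open Set Metric Filter Topology

universe u

namespace Stmt1Aux

variable {X : Type u} [MetricSpace X] [CompactSpace X]

lemma unifFlow (φ : ℝ → X → X) (hc : Continuous fun p : ℝ × X => φ p.1 p.2) :
    ∀ ε > (0:ℝ), ∃ δ > (0:ℝ), ∀ s t : ℝ, ∀ x y : X, |s| ≤ 9 → |t| ≤ 9 → |s - t| ≤ δ →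
      dist x y ≤ δ → dist (φ s x) (φ t y) ≤ ε := by
  intro ε hε
  haveI : CompactSpace (Icc (-9:ℝ) 9) := isCompact_iff_compactSpace.mp isCompact_Icc
  set f : (Icc (-9:ℝ) 9) × X → X := fun p => φ p.1.1 p.2 with hf
  have hfc : Continuous f :=
    hc.comp ((continuous_subtype_val.comp continuous_fst).prodMk continuous_snd)
  have huc : UniformContinuous f := CompactSpace.uniformContinuous_of_continuous hfc
  rw [Metric.uniformContinuous_iff] at huc
  obtain ⟨δ, hδ, hd⟩ := huc ε hε
  refine ⟨δ/2, by positivity, ?_⟩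
  intro s t x y hs ht hst hxy
  have hsm : s ∈ Icc (-9:ℝ) 9 := abs_le.mp hs
  have htm : t ∈ Icc (-9:ℝ) 9 := abs_le.mp ht
  have h1 : dist ((⟨⟨s, hsm⟩, x⟩ : (Icc (-9:ℝ) 9) × X)) ⟨⟨t, htm⟩, y⟩ < δ := by
    rw [Prod.dist_eq, Subtype.dist_eq, Real.dist_eq]
    exact lt_of_le_of_lt (max_le hst hxy) (half_lt_self hδ)
  exact le_of_lt (hd h1)

lemma no_small_period (φ : ℝ → X → X) (hc : Continuous fun p : ℝ × X => φ p.1 p.2)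
    (h0 : ∀ x, φ 0 x = x) (hadd : ∀ s t x, φ (s+t) x = φ s (φ t x))
    (hreg : ∀ x : X, ∃ t, φ t x ≠ x) :
    ∃ t0 : ℝ, 0 < t0 ∧ t0 ≤ 1 ∧ ∀ z v, 0 < v → v ≤ t0 → φ v z ≠ z := by
  by_contra hcon
  push_neg at hcon
  have hseq : ∀ n : ℕ, ∃ p : X × ℝ, 0 < p.2 ∧ p.2 ≤ 1/(n+1) ∧ φ p.2 p.1 = p.1 := by
    intro n
    obtain ⟨z, v, h1, h2, h3⟩ := hcon (1/(n+1)) (by positivity)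
      (by rw [div_le_one (by positivity)]; linarith [Nat.cast_nonneg (α := ℝ) n])
    exact ⟨(z, v), h1, h2, h3⟩
  choose p hp1 hp2 hp3 using hseq
  obtain ⟨x, -, k, hk, hx⟩ := isCompact_univ.tendsto_subseq
    (x := fun n => (p n).1) (fun n => mem_univ _)
  have hmul : ∀ n (m : ℕ), φ (m * (p n).2) (p n).1 = (p n).1 := by
    intro n m
    induction m with
    | zero => simpa using h0 _
    | succ m ih =>
        have he : ((m:ℝ)+1) * (p n).2 = (p n).2 + m * (p n).2 := by ring
        rw [Nat.cast_succ, he, hadd, ih, hp3]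
  have key0 : ∀ s : ℝ, 0 ≤ s → φ s x = x := by
    intro s hs
    apply eq_of_forall_dist_le
    intro ε hε
    have hφs : Continuous fun y : X => φ s y :=
      hc.comp (continuous_const.prodMk continuous_id)
    have T1 : Tendsto (fun n => φ s ((p (k n)).1)) atTop (𝓝 (φ s x)) :=
      (hφs.tendsto x).comp hx
    obtain ⟨δ, hδp, hδ⟩ := unifFlow φ hc (ε/3) (by positivity)
    rw [Metric.tendsto_atTop] at T1 hx
    obtain ⟨N1, hN1⟩ := T1 (ε/3) (by positivity)
    obtain ⟨N2, hN2⟩ := hx (ε/3) (by positivity)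
    obtain ⟨N3, hN3⟩ := exists_nat_one_div_lt hδp
    set n := max (max N1 N2) N3 with hn
    set v := (p (k n)).2
    set z := (p (k n)).1
    have hkn : (n:ℝ) ≤ (k n : ℝ) := by exact_mod_cast hk.le_apply
    have hv1 : v ≤ 1/(k n + 1) := hp2 (k n)
    have hvN3 : v ≤ 1/(N3+1) := by
      refine hv1.trans ?_
      apply div_le_div_of_nonneg_left one_pos.le (by positivity)
      have : (N3:ℝ) ≤ (k n : ℝ) := le_trans (by exact_mod_cast le_max_right _ _ : (N3:ℝ) ≤ (n:ℝ)) hkn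
      linarith
    have hvδ : v ≤ δ := le_of_lt (lt_of_le_of_lt hvN3 hN3)
    have hv1' : v ≤ 1 := by
      refine hv1.trans ?_
      rw [div_le_one (by positivity)]
      linarith [Nat.cast_nonneg (α := ℝ) (k n)]
    have hvpos : 0 < v := hp1 (k n)
    -- the remainder
    set m : ℕ := (⌊s / v⌋).toNat with hm
    have hmnn : (0:ℤ) ≤ ⌊s / v⌋ := Int.floor_nonneg.mpr (div_nonneg hs hvpos.le)
    have hmc : ((m:ℤ):ℝ) = ((⌊s / v⌋ : ℤ) : ℝ) := by rw [hm, Int.toNat_of_nonneg hmnn]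
    set r := s - m * v with hr
    have hr0 : 0 ≤ r := by
      have h1 : ((⌊s / v⌋ : ℤ) : ℝ) ≤ s / v := Int.floor_le _
      have : (m:ℝ) * v ≤ s := by
        have := mul_le_mul_of_nonneg_right h1 hvpos.le
        rw [div_mul_cancel₀ _ (ne_of_gt hvpos)] at this
        calc (m:ℝ) * v = ((⌊s / v⌋ : ℤ) : ℝ) * v := by rw [← hmc]; norm_cast
        _ ≤ s := this
      linarith
    have hrv : r ≤ v := by
      have h1 : s / v < ((⌊s / v⌋ : ℤ) : ℝ) + 1 := Int.lt_floor_add_one _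
      have : s < ((m:ℝ) + 1) * v := by
        have := mul_lt_mul_of_pos_right h1 hvpos
        rw [div_mul_cancel₀ _ (ne_of_gt hvpos)] at this
        calc s < (((⌊s / v⌋ : ℤ) : ℝ) + 1) * v := this
        _ = ((m:ℝ) + 1) * v := by rw [← hmc]; norm_cast
      nlinarith
    have hφsz : φ s z = φ r z := by
      have : s = r + m * v := by rw [hr]; ring
      rw [this, hadd, hmul (k n) m]
    have d2 : dist (φ s z) z ≤ ε/3 := by
      rw [hφsz]
      have := hδ r 0 z z (by rw [abs_of_nonneg hr0]; linarith) (by norm_num)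
        (by rw [sub_zero, abs_of_nonneg hr0]; linarith) (by simp; linarith)
      rwa [h0 z] at this
    have d1 : dist (φ s x) (φ s z) ≤ ε/3 := by
      have := hN1 n (le_trans (le_max_left _ _) (le_max_left _ _))
      rw [dist_comm]
      exact (le_of_lt this)
    have d3 : dist z x ≤ ε/3 :=
      le_of_lt (hN2 n (le_trans (le_max_right _ _) (le_max_left _ _)))
    calc dist (φ s x) x ≤ dist (φ s x) (φ s z) + dist (φ s z) z + dist z x :=
          dist_triangle4 _ _ _ _
      _ ≤ ε/3 + ε/3 + ε/3 := by gcongr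
      _ = ε := by ring
  have key : ∀ s : ℝ, φ s x = x := by
    intro s
    rcases le_or_gt 0 s with hs | hs
    · exact key0 s hs
    · have h1 : φ (-s) x = x := key0 (-s) (by linarith)
      conv_lhs => rw [← h1]
      rw [← hadd, add_neg_cancel, h0]
  obtain ⟨t, ht⟩ := hreg x
  exact ht (key t)

end Stmt1Aux

namespace Stmt1Aux2
open MeasureTheory
set_option linter.unusedSectionVars false
variable {X : Type u} [MetricSpace X] [CompactSpace X]

noncomputable def Gw (φ : ℝ → X → X) (lam : ℝ) (x y : X) (t : ℝ) : ℝ :=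
  (∫ u in t..(lam+t), dist (φ u y) x) - (∫ u in (-lam+t)..t, dist (φ u y) x)

lemma distInt_cont (φ : ℝ → X → X) (hc : Continuous fun p : ℝ × X => φ p.1 p.2) (x y : X) :
    Continuous fun u : ℝ => dist (φ u y) x :=
  (hc.comp (continuous_id.prodMk continuous_const)).dist continuous_const

lemma Gw_flow (φ : ℝ → X → X) (hadd : ∀ s t x, φ (s+t) x = φ s (φ t x))
    (lam : ℝ) (x y : X) (t : ℝ) :
    Gw φ lam x (φ t y) 0 = Gw φ lam x y t := by
  unfold Gw
  have h1 : ∀ u : ℝ, dist (φ u (φ t y)) x = (fun u => dist (φ u y) x) (u + t) := by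
    intro u; simp only [← hadd]
  simp only [h1]
  rw [intervalIntegral.integral_comp_add_right (fun u => dist (φ u y) x) t,
      intervalIntegral.integral_comp_add_right (fun u => dist (φ u y) x) t]
  norm_num

lemma Gw_split (φ : ℝ → X → X) (hc : Continuous fun p : ℝ × X => φ p.1 p.2)
    (lam : ℝ) (x y : X) (t' t : ℝ) :
    Gw φ lam x y t - Gw φ lam x y t' =
      (∫ u in (lam+t')..(lam+t), dist (φ u y) x)
      + (∫ u in (-lam+t')..(-lam+t), dist (φ u y) x)
      - 2 * ∫ u in t'..t, dist (φ u y) x := by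
  have hi : ∀ a b : ℝ, IntervalIntegrable (fun u => dist (φ u y) x) volume a b :=
    fun a b => (distInt_cont φ hc x y).intervalIntegrable a b
  have eA := intervalIntegral.integral_add_adjacent_intervals (μ := volume)
    (a := t') (b := lam+t') (c := lam+t) (hi _ _) (hi _ _)
  have eB := intervalIntegral.integral_add_adjacent_intervals (μ := volume)
    (a := t') (b := t) (c := lam+t) (hi _ _) (hi _ _)
  have eC := intervalIntegral.integral_add_adjacent_intervals (μ := volume)
    (a := -lam+t') (b := -lam+t) (c := t) (hi _ _) (hi _ _)
  have eD := intervalIntegral.integral_add_adjacent_intervals (μ := volume)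
    (a := -lam+t') (b := t') (c := t) (hi _ _) (hi _ _)
  unfold Gw
  linarith

lemma Gw_mono (φ : ℝ → X → X) (hc : Continuous fun p : ℝ × X => φ p.1 p.2)
    (lam a0 : ℝ) (x y : X) (t' t : ℝ) (htt : t' ≤ t)
    (h1 : ∀ u ∈ Icc (lam+t') (lam+t), 3/4*a0 ≤ dist (φ u y) x)
    (h2 : ∀ u ∈ Icc (-lam+t') (-lam+t), 3/4*a0 ≤ dist (φ u y) x)
    (h3 : ∀ u ∈ Icc t' t, dist (φ u y) x ≤ 1/4*a0) :
    a0 * (t - t') ≤ Gw φ lam x y t - Gw φ lam x y t' := by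
  rw [Gw_split φ hc lam x y t' t]
  have hi : ∀ a b : ℝ, IntervalIntegrable (fun u => dist (φ u y) x) volume a b :=
    fun a b => (distInt_cont φ hc x y).intervalIntegrable a b
  have b1 : (t - t') * (3/4*a0) ≤ ∫ u in (lam+t')..(lam+t), dist (φ u y) x := by
    have h := intervalIntegral.integral_mono_on (by linarith) intervalIntegrable_const (hi _ _) h1
    rw [intervalIntegral.integral_const, smul_eq_mul] at h
    calc (t - t') * (3/4*a0) = (lam + t - (lam + t')) * (3/4*a0) := by ring
      _ ≤ _ := h
  have b2 : (t - t') * (3/4*a0) ≤ ∫ u in (-lam+t')..(-lam+t), dist (φ u y) x := by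
    have h := intervalIntegral.integral_mono_on (by linarith) intervalIntegrable_const (hi _ _) h2
    rw [intervalIntegral.integral_const, smul_eq_mul] at h
    calc (t - t') * (3/4*a0) = (-lam + t - (-lam + t')) * (3/4*a0) := by ring
      _ ≤ _ := h
  have b3 : (∫ u in t'..t, dist (φ u y) x) ≤ (t - t') * (1/4*a0) := by
    have h := intervalIntegral.integral_mono_on (by linarith) (hi _ _) intervalIntegrable_const h3
    rw [intervalIntegral.integral_const, smul_eq_mul] at h
    exact h
  have e : a0 * (t - t') = (t - t') * (3/4*a0) + (t - t') * (3/4*a0) - 2*((t - t') * (1/4*a0)) := by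
    ring
  linarith

lemma Gw_lip (φ : ℝ → X → X) (hc : Continuous fun p : ℝ × X => φ p.1 p.2)
    (lam C : ℝ) (x y : X) (hC : ∀ u : ℝ, dist (φ u y) x ≤ C) (t' t : ℝ) :
    |Gw φ lam x y t - Gw φ lam x y t'| ≤ 4*C*|t - t'| := by
  rw [Gw_split φ hc lam x y t' t]
  have key : ∀ a b : ℝ, |b - a| = |t - t'| →
      |∫ u in a..b, dist (φ u y) x| ≤ C * |t - t'| := by
    intro a b hab
    have := intervalIntegral.norm_integral_le_of_norm_le_const (C := C)
      (f := fun u => dist (φ u y) x) (a := a) (b := b)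
      (fun u _ => by rw [Real.norm_eq_abs, abs_of_nonneg dist_nonneg]; exact hC u)
    rw [Real.norm_eq_abs, hab] at this
    exact this
  have k1 := key (lam+t') (lam+t) (by rw [show lam+t - (lam+t') = t - t' by ring])
  have k2 := key (-lam+t') (-lam+t) (by rw [show -lam+t - (-lam+t') = t - t' by ring])
  have k3 := key t' t rfl
  obtain ⟨k1a, k1b⟩ := abs_le.mp k1
  obtain ⟨k2a, k2b⟩ := abs_le.mp k2
  obtain ⟨k3a, k3b⟩ := abs_le.mp k3
  rw [abs_le]
  constructor <;> nlinarith [abs_nonneg (t - t')]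

lemma Gw_dist (φ : ℝ → X → X) (hc : Continuous fun p : ℝ × X => φ p.1 p.2)
    (lam : ℝ) (hlam : 0 ≤ lam) (x x' y y' : X) (t c : ℝ)
    (hb : ∀ u ∈ Icc (-lam+t) (lam+t), |dist (φ u y) x - dist (φ u y') x'| ≤ c) :
    |Gw φ lam x y t - Gw φ lam x' y' t| ≤ 2*(lam*c) := by
  have hi1 : IntervalIntegrable (fun u => dist (φ u y) x) volume t (lam+t) :=
    (distInt_cont φ hc x y).intervalIntegrable _ _
  have hi2 : IntervalIntegrable (fun u => dist (φ u y') x') volume t (lam+t) :=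
    (distInt_cont φ hc x' y').intervalIntegrable _ _
  have hi3 : IntervalIntegrable (fun u => dist (φ u y) x) volume (-lam+t) t :=
    (distInt_cont φ hc x y).intervalIntegrable _ _
  have hi4 : IntervalIntegrable (fun u => dist (φ u y') x') volume (-lam+t) t :=
    (distInt_cont φ hc x' y').intervalIntegrable _ _
  have e : Gw φ lam x y t - Gw φ lam x' y' t =
      (∫ u in t..(lam+t), (dist (φ u y) x - dist (φ u y') x'))
      - (∫ u in (-lam+t)..t, (dist (φ u y) x - dist (φ u y') x')) := by
    rw [intervalIntegral.integral_sub hi1 hi2, intervalIntegral.integral_sub hi3 hi4]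
    unfold Gw; ring
  rw [e]
  have key1 : |∫ u in t..(lam+t), (dist (φ u y) x - dist (φ u y') x')| ≤ lam * c := by
    have hsub : Set.uIoc t (lam+t) ⊆ Icc (-lam+t) (lam+t) := by
      rw [Set.uIoc_of_le (by linarith)]
      intro u hu; exact ⟨by linarith [hu.1], hu.2⟩
    have := intervalIntegral.norm_integral_le_of_norm_le_const (C := c)
      (f := fun u => dist (φ u y) x - dist (φ u y') x') (a := t) (b := lam+t)
      (fun u hu => by rw [Real.norm_eq_abs]; exact hb u (hsub hu))
    rw [Real.norm_eq_abs, show lam + t - t = lam by ring, abs_of_nonneg hlam, mul_comm] at this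
    exact this
  have key2 : |∫ u in (-lam+t)..t, (dist (φ u y) x - dist (φ u y') x')| ≤ lam * c := by
    have hsub : Set.uIoc (-lam+t) t ⊆ Icc (-lam+t) (lam+t) := by
      rw [Set.uIoc_of_le (by linarith)]
      intro u hu; exact ⟨le_of_lt hu.1, by linarith [hu.2]⟩
    have := intervalIntegral.norm_integral_le_of_norm_le_const (C := c)
      (f := fun u => dist (φ u y) x - dist (φ u y') x') (a := -lam+t) (b := t)
      (fun u hu => by rw [Real.norm_eq_abs]; exact hb u (hsub hu))
    rw [Real.norm_eq_abs, show t - (-lam+t) = lam by ring, abs_of_nonneg hlam, mul_comm] at this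
    exact this
  obtain ⟨ka, kb⟩ := abs_le.mp key1
  obtain ⟨kc, kd⟩ := abs_le.mp key2
  rw [abs_le]
  constructor <;> linarith

end Stmt1Aux2


set_option maxHeartbeats 4000000 in
/-- Every regular flow on a compact metric space admits a monotonous field of
cross sections. -/
theorem stmt1 {X : Type u} [MetricSpace X] [CompactSpace X] (φ : ℝ → X → X)
    (hφ : IsRegularFlow φ) :
    ∃ H : X → Set X, IsCrossSectionField φ H ∧ IsMonotonousField φ H := by
  classical
  obtain ⟨⟨hc, h0, hadd⟩, hreg⟩ := hφ
  rcases isEmpty_or_nonempty X with hX | hX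
  · exact ⟨fun x => {x},
      ⟨⟨fun x => isEmptyElim x, fun x => isEmptyElim x, fun x => isEmptyElim x⟩,
        1, one_pos,
        ⟨⟨fun x => isEmptyElim x, fun x => isEmptyElim x, fun x => isEmptyElim x⟩,
          1, one_pos, fun x => isEmptyElim x⟩,
        fun x => isEmptyElim x⟩,
      1, one_pos, fun x => isEmptyElim x⟩
  -- flow algebra helpers
  have hcomm : ∀ (s t : ℝ) (z : X), φ s (φ t z) = φ t (φ s z) := by
    intro s t z; rw [← hadd, add_comm, hadd]
  have hcancel : ∀ (t : ℝ) (z : X), φ (-t) (φ t z) = z := by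
    intro t z; rw [← hadd, neg_add_cancel, h0]
  -- global bound
  obtain ⟨C, hCpos, hC⟩ : ∃ C : ℝ, 0 < C ∧ ∀ z w : X, dist z w ≤ C := by
    obtain ⟨C, hC⟩ := Metric.isBounded_iff.mp (isCompact_univ (X := X)).isBounded
    refine ⟨C + 1, ?_, fun z w => by have := hC (mem_univ z) (mem_univ w); linarith⟩
    have := hC (mem_univ (Classical.arbitrary X)) (mem_univ (Classical.arbitrary X))
    have h2 := dist_nonneg (x := Classical.arbitrary X) (y := Classical.arbitrary X)
    linarith
  -- displacement modulus
  have hdisp : ∀ ε > (0:ℝ), ∃ δ > (0:ℝ), δ ≤ 1 ∧ ∀ (z : X) (v : ℝ), |v| ≤ δ →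
      dist (φ v z) z ≤ ε := by
    intro ε hε
    obtain ⟨δ, hδp, hδ⟩ := Stmt1Aux.unifFlow φ hc ε hε
    refine ⟨min δ 1, by positivity, min_le_right _ _, ?_⟩
    intro z v hv
    have h9 : |v| ≤ 9 := le_trans (hv.trans (min_le_right _ _)) (by norm_num)
    have := hδ v 0 z z h9 (by norm_num)
      (by rw [sub_zero]; exact hv.trans (min_le_left _ _)) (by simp; linarith)
    rwa [h0] at this
  -- flow distance modulus
  have hfmod : ∀ ε > (0:ℝ), ∃ δ > (0:ℝ), ∀ (z w : X), dist z w ≤ δ → ∀ u : ℝ, |u| ≤ 9 →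
      dist (φ u z) (φ u w) ≤ ε := by
    intro ε hε
    obtain ⟨δ, hδp, hδ⟩ := Stmt1Aux.unifFlow φ hc ε hε
    exact ⟨δ, hδp, fun z w hzw u hu => hδ u u z w hu hu (by simp; linarith) hzw⟩
  obtain ⟨t0, ht0p, ht0le, hper⟩ := Stmt1Aux.no_small_period φ hc h0 hadd hreg
  set lam := t0/2 with hlam_def
  have hlamp : 0 < lam := by positivity
  have hlam1 : lam ≤ 1/2 := by rw [hlam_def]; linarith
  have hlam9 : lam ≤ 9 := by linarith
  -- minimal displacement a0
  obtain ⟨a0, ha0p, ha0⟩ : ∃ a0 > (0:ℝ), ∀ (z : X) (v : ℝ), lam/2 ≤ v → v ≤ 3*lam/2 →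
      a0 ≤ dist (φ v z) z := by
    have hS : IsCompact ((univ : Set X) ×ˢ Icc (lam/2) (3*lam/2)) :=
      isCompact_univ.prod isCompact_Icc
    have hne : ((univ : Set X) ×ˢ Icc (lam/2) (3*lam/2)).Nonempty :=
      ⟨(Classical.arbitrary X, lam/2), mem_univ _, le_refl _, by linarith⟩
    have hcf : ContinuousOn (fun p : X × ℝ => dist (φ p.2 p.1) p.1)
        ((univ : Set X) ×ˢ Icc (lam/2) (3*lam/2)) :=
      ((hc.comp (continuous_snd.prodMk continuous_fst)).dist continuous_fst).continuousOn
    obtain ⟨⟨z0, v0⟩, hmem, hmin⟩ := hS.exists_isMinOn hne hcf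
    refine ⟨dist (φ v0 z0) z0, ?_, ?_⟩
    · rw [gt_iff_lt, dist_pos]
      have hm1 : lam/2 ≤ v0 := hmem.2.1
      have hm2 : v0 ≤ 3*lam/2 := hmem.2.2
      exact hper z0 v0 (by linarith) (by linarith [hlam_def.ge, hlam_def.le])
    · intro z v h1 h2
      exact hmin (Set.mk_mem_prod (mem_univ z) ⟨h1, h2⟩)
  have ha0neg : ∀ (z : X) (v : ℝ), lam/2 ≤ |v| → |v| ≤ 3*lam/2 → a0 ≤ dist (φ v z) z := by
    intro z v h1 h2
    rcases le_or_gt 0 v with hv | hv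
    · rw [abs_of_nonneg hv] at h1 h2; exact ha0 z v h1 h2
    · rw [abs_of_neg hv] at h1 h2
      have := ha0 (φ v z) (-v) h1 h2
      rwa [hcancel v z, dist_comm] at this
  obtain ⟨r1, hr1p, hr1⟩ := hfmod (a0/8) (by positivity)
  obtain ⟨t1a, ht1ap, ht1a1, ht1a⟩ := hdisp (a0/8) (by positivity)
  set t1 := min t1a (lam/2) with ht1_def
  have ht1p : 0 < t1 := lt_min ht1ap (by positivity)
  have ht1lam : t1 ≤ lam/2 := min_le_right _ _
  have ht11 : t1 ≤ 1 := le_trans (min_le_left _ _) ht1a1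
  have ht1 : ∀ (z : X) (v : ℝ), |v| ≤ t1 → dist (φ v z) z ≤ a0/8 :=
    fun z v hv => ht1a z v (hv.trans (min_le_left _ _))
  clear_value t1
  -- Whitney function
  set F : X → X → ℝ := fun x y =>
    Stmt1Aux2.Gw φ lam x y 0 - Stmt1Aux2.Gw φ lam x x 0 with hF_def
  clear_value F
  have hFshift : ∀ (x y : X) (t : ℝ), F x (φ t y) =
      Stmt1Aux2.Gw φ lam x y t - Stmt1Aux2.Gw φ lam x x 0 := by
    intro x y t
    simp only [hF_def]
    rw [Stmt1Aux2.Gw_flow φ hadd lam x y t]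
  have hFxx : ∀ x : X, F x x = 0 := by intro x; simp [hF_def]
  have hFmono : ∀ (x y : X), dist x y ≤ r1 → ∀ t' t : ℝ, -t1 ≤ t' → t' ≤ t → t ≤ t1 →
      a0 * (t - t') ≤ F x (φ t y) - F x (φ t' y) := by
    intro x y hxy t' t h1 h2 h3
    rw [hFshift, hFshift]
    have key := Stmt1Aux2.Gw_mono φ hc lam a0 x y t' t h2 ?_ ?_ ?_
    · linarith
    · intro u hu
      have hu1 : lam/2 ≤ u := by have := hu.1; linarith [ht1lam]
      have hu2 : u ≤ 3*lam/2 := by have := hu.2; linarith [ht1lam]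
      have hu9 : |u| ≤ 9 := by rw [abs_of_nonneg (by linarith : (0:ℝ) ≤ u)]; linarith
      have h5 : a0 ≤ dist (φ u x) x := ha0 x u hu1 hu2
      have h6 : dist (φ u x) (φ u y) ≤ a0/8 := hr1 x y hxy u hu9
      have h7 : dist (φ u x) x ≤ dist (φ u x) (φ u y) + dist (φ u y) x := dist_triangle _ _ _
      linarith
    · intro u hu
      have hu1 : lam/2 ≤ -u := by have := hu.2; linarith [ht1lam]
      have hu2 : -u ≤ 3*lam/2 := by have := hu.1; linarith [ht1lam]
      have hu1' : lam/2 ≤ |u| := by rwa [abs_of_nonpos (by linarith : u ≤ 0)]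
      have hu2' : |u| ≤ 3*lam/2 := by rwa [abs_of_nonpos (by linarith : u ≤ 0)]
      have hu9 : |u| ≤ 9 := by linarith
      have h5 : a0 ≤ dist (φ u x) x := ha0neg x u hu1' hu2'
      have h6 : dist (φ u x) (φ u y) ≤ a0/8 := hr1 x y hxy u hu9
      have h7 : dist (φ u x) x ≤ dist (φ u x) (φ u y) + dist (φ u y) x := dist_triangle _ _ _
      linarith
    · intro u hu
      have hu1 : |u| ≤ t1 := abs_le.mpr ⟨by linarith [hu.1], by linarith [hu.2]⟩
      have hu9 : |u| ≤ 9 := by linarith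
      have h5 : dist (φ u y) x ≤ dist (φ u y) (φ u x) + dist (φ u x) x := dist_triangle _ _ _
      have h6 : dist (φ u y) (φ u x) ≤ a0/8 := by
        rw [dist_comm]; exact hr1 x y hxy u hu9
      have h7 : dist (φ u x) x ≤ a0/8 := ht1 x u hu1
      linarith
  -- modulus of continuity of F
  have hFmod : ∀ ε > (0:ℝ), ∃ δ > (0:ℝ), ∀ x x' y y' : X, dist x x' ≤ δ → dist y y' ≤ δ →
      |F x y - F x' y'| ≤ ε := by
    intro ε hε
    obtain ⟨δ1, hδ1p, hδ1⟩ := hfmod (ε/16) (by positivity)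
    refine ⟨min δ1 (ε/16), by positivity, ?_⟩
    intro x x' y y' hxx hyy
    have hptw : ∀ (w w' : X), dist w w' ≤ min δ1 (ε/16) →
        ∀ u ∈ Icc (-lam+0) (lam+0), |dist (φ u w) x - dist (φ u w') x'| ≤ ε/8 := by
      intro w w' hww u hu
      have hu9 : |u| ≤ 9 := by
        rw [abs_le]; constructor
        · have := hu.1; linarith
        · have := hu.2; linarith
      have h1 : dist (φ u w) (φ u w') ≤ ε/16 := hδ1 w w' (hww.trans (min_le_left _ _)) u hu9
      have h2 : |dist (φ u w) x - dist (φ u w') x| ≤ dist (φ u w) (φ u w') :=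
        abs_dist_sub_le _ _ _
      have h3 : |dist (φ u w') x - dist (φ u w') x'| ≤ dist x x' := by
        rw [dist_comm (φ u w') x, dist_comm (φ u w') x']
        exact abs_dist_sub_le _ _ _
      have h4 : dist x x' ≤ ε/16 := hxx.trans (min_le_right _ _)
      calc |dist (φ u w) x - dist (φ u w') x'|
          = |(dist (φ u w) x - dist (φ u w') x) + (dist (φ u w') x - dist (φ u w') x')| := by
            ring_nf
        _ ≤ |dist (φ u w) x - dist (φ u w') x| + |dist (φ u w') x - dist (φ u w') x'| :=
            abs_add_le _ _
        _ ≤ ε/8 := by linarith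
    have k1 : |Stmt1Aux2.Gw φ lam x y 0 - Stmt1Aux2.Gw φ lam x' y' 0| ≤ 2*(lam*(ε/8)) :=
      Stmt1Aux2.Gw_dist φ hc lam hlamp.le x x' y y' 0 (ε/8) (hptw y y' hyy)
    have k2 : |Stmt1Aux2.Gw φ lam x x 0 - Stmt1Aux2.Gw φ lam x' x' 0| ≤ 2*(lam*(ε/8)) :=
      Stmt1Aux2.Gw_dist φ hc lam hlamp.le x x' x x' 0 (ε/8) (hptw x x' hxx)
    have e : F x y - F x' y' = (Stmt1Aux2.Gw φ lam x y 0 - Stmt1Aux2.Gw φ lam x' y' 0)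
        - (Stmt1Aux2.Gw φ lam x x 0 - Stmt1Aux2.Gw φ lam x' x' 0) := by
      simp only [hF_def]; ring
    rw [e]
    obtain ⟨k1a, k1b⟩ := abs_le.mp k1
    obtain ⟨k2a, k2b⟩ := abs_le.mp k2
    rw [abs_le]
    constructor <;> nlinarith
  -- continuity in the time variable
  have hFcont : ∀ (x y : X), Continuous fun t : ℝ => F x (φ t y) := by
    intro x y
    have he : (fun t : ℝ => F x (φ t y)) =
        fun t => Stmt1Aux2.Gw φ lam x y t - Stmt1Aux2.Gw φ lam x x 0 :=
      funext (hFshift x y)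
    rw [he]
    apply Continuous.sub _ continuous_const
    rw [Metric.continuous_iff]
    intro t ε hε
    refine ⟨ε/(4*C+1), by positivity, ?_⟩
    intro t' ht'
    have hlip := Stmt1Aux2.Gw_lip φ hc lam C x y (fun u => hC _ _) t t'
    rw [Real.dist_eq] at ht' ⊢
    have h2 : 4*C*|t' - t| ≤ 4*C*(ε/(4*C+1)) := by
      apply mul_le_mul_of_nonneg_left ht'.le (by positivity)
    have h3 : 4*C*(ε/(4*C+1)) < ε := by
      rw [show 4*C*(ε/(4*C+1)) = (4*C*ε)/(4*C+1) by ring, div_lt_iff₀ (by positivity)]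
      nlinarith
    calc |Stmt1Aux2.Gw φ lam x y t' - Stmt1Aux2.Gw φ lam x y t| ≤ 4*C*|t' - t| :=
          Stmt1Aux2.Gw_lip φ hc lam C x y (fun u => hC _ _) t t'
      _ < ε := lt_of_le_of_lt h2 h3
  -- the root radius r2
  obtain ⟨r2a, hr2ap, hr2a⟩ := hFmod (a0*t1/4) (by positivity)
  set r2 := min r1 r2a with hr2_def
  have hr2p : 0 < r2 := lt_min hr1p hr2ap
  have hr2r1 : r2 ≤ r1 := min_le_left _ _
  have hr2r2a : r2 ≤ r2a := min_le_right _ _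
  clear_value r2
  have hFdiag : ∀ x y : X, dist x y ≤ r2 → |F x y| ≤ a0*t1/4 := by
    intro x y h
    have := hr2a x x y x (by simp; positivity) (by rw [dist_comm]; exact h.trans hr2r2a)
    rwa [hFxx, sub_zero] at this
  -- existence of the root
  have hroot : ∀ x y : X, dist x y ≤ r2 → ∃ s : ℝ, |s| ≤ t1/2 ∧ F x (φ s y) = 0 := by
    intro x y h
    have hd := abs_le.mp (hFdiag x y h)
    have e1 : a0*t1/4 ≤ F x (φ (t1/2) y) := by
      have hm := hFmono x y (h.trans hr2r1) 0 (t1/2) (by linarith) (by linarith) (by linarith)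
      rw [h0] at hm
      nlinarith
    have e2 : F x (φ (-(t1/2)) y) ≤ -(a0*t1/4) := by
      have hm := hFmono x y (h.trans hr2r1) (-(t1/2)) 0 (by linarith) (by linarith) (by linarith)
      rw [h0] at hm
      nlinarith
    have h0mem : (0:ℝ) ∈ Icc (F x (φ (-(t1/2)) y)) (F x (φ (t1/2) y)) := by
      constructor <;> [linarith; linarith]
    have hsub := intermediate_value_Icc (by linarith : -(t1/2) ≤ t1/2)
      (hFcont x y).continuousOn
    obtain ⟨s, hs, hFs⟩ := hsub h0mem
    exact ⟨s, abs_le.mpr ⟨hs.1, hs.2⟩, hFs⟩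
  -- uniqueness of the root
  have huniq : ∀ x y : X, dist x y ≤ r1 → ∀ s s' : ℝ, |s| ≤ t1 → |s'| ≤ t1 →
      F x (φ s y) = 0 → F x (φ s' y) = 0 → s = s' := by
    intro x y h s s' hs hs' e e'
    obtain ⟨hs1, hs2⟩ := abs_le.mp hs
    obtain ⟨hs1', hs2'⟩ := abs_le.mp hs'
    rcases lt_trichotomy s s' with hlt | heq | hgt
    · have := hFmono x y h s s' hs1 hlt.le hs2'
      rw [e, e'] at this; nlinarith
    · exact heq
    · have := hFmono x y h s' s hs1' hgt.le hs2
      rw [e, e'] at this; nlinarith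
  -- the local time function
  set l : X → X → ℝ := fun x y =>
    if h : dist x y ≤ r2 then -(Classical.choose (hroot x y h)) else 0 with hl_def
  have hl_spec : ∀ (x y : X) (h : dist x y ≤ r2),
      |l x y| ≤ t1/2 ∧ F x (φ (-(l x y)) y) = 0 := by
    intro x y h
    simp only [hl_def, dif_pos h, neg_neg, abs_neg]
    exact Classical.choose_spec (hroot x y h)
  have hl_bd : ∀ x y : X, |l x y| ≤ t1/2 := by
    intro x y
    by_cases h : dist x y ≤ r2
    · exact (hl_spec x y h).1
    · simp only [hl_def, dif_neg h, abs_zero]; positivity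
  have hl_self : ∀ x : X, l x x = 0 := by
    intro x
    have h : dist x x ≤ r2 := by simp [hr2p.le]
    obtain ⟨hb, he⟩ := hl_spec x x h
    have := huniq x x (by simp [hr1p.le]) (-(l x x)) 0
      (by rw [abs_neg]; linarith) (by simp [ht1p.le]) he (by rw [h0]; exact hFxx x)
    linarith [neg_eq_zero.mp this]
  have hl_shift : ∀ (x y : X) (t : ℝ), dist x y ≤ r2 → dist x (φ t y) ≤ r2 → |t| ≤ t1/4 →
      l x (φ t y) = l x y + t := by
    intro x y t hxy hxz ht
    obtain ⟨hb1, he1⟩ := hl_spec x y hxy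
    obtain ⟨hb2, he2⟩ := hl_spec x (φ t y) hxz
    have he2' : F x (φ (-(l x (φ t y)) + t) y) = 0 := by rw [hadd]; exact he2
    have habs : |(-(l x (φ t y)) + t)| ≤ t1 := by
      have := abs_add_le (-(l x (φ t y))) t
      rw [abs_neg] at this
      linarith
    have := huniq x y (hxy.trans hr2r1) (-(l x y)) (-(l x (φ t y)) + t)
      (by rw [abs_neg]; linarith) habs he1 he2'
    linarith
  clear_value l
  -- modulus of continuity of l
  have hl_mod : ∀ ε > (0:ℝ), ∃ δ > (0:ℝ), ∀ x y x' y' : X, dist x y ≤ r2 → dist x' y' ≤ r2 →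
      dist x x' ≤ δ → dist y y' ≤ δ → |l x y - l x' y'| ≤ ε := by
    intro ε hε
    obtain ⟨δ1, hδ1p, hδ1⟩ := hFmod (a0*ε) (by positivity)
    obtain ⟨δ2, hδ2p, hδ2⟩ := hfmod δ1 hδ1p
    refine ⟨min δ1 δ2, by positivity, ?_⟩
    intro x y x' y' hxy hxy' hxx hyy
    obtain ⟨hb1, he1⟩ := hl_spec x y hxy
    obtain ⟨hb2, he2⟩ := hl_spec x' y' hxy'
    have hFs' : |F x (φ (-(l x' y')) y)| ≤ a0*ε := by
      have hd : dist (φ (-(l x' y')) y) (φ (-(l x' y')) y') ≤ δ1 := by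
        apply hδ2 y y' (hyy.trans (min_le_right _ _)) _
        rw [abs_neg]
        calc |l x' y'| ≤ t1/2 := hb2
          _ ≤ 9 := by linarith [ht1lam, hlam1]
      have := hδ1 x x' (φ (-(l x' y')) y) (φ (-(l x' y')) y')
        (hxx.trans (min_le_left _ _)) hd
      rwa [he2, sub_zero] at this
    obtain ⟨hf1, hf2⟩ := abs_le.mp hFs'
    have hsb1 := abs_le.mp hb1
    have hsb2 := abs_le.mp hb2
    have key : |l x y - l x' y'| ≤ ε := by
      rcases le_total (-(l x y)) (-(l x' y')) with hle | hle
      · have := hFmono x y (hxy.trans hr2r1) (-(l x y)) (-(l x' y'))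
          (by linarith) hle (by linarith)
        rw [he1] at this
        rw [abs_le]
        constructor <;> nlinarith [ha0p]
      · have := hFmono x y (hxy.trans hr2r1) (-(l x' y')) (-(l x y))
          (by linarith) hle (by linarith)
        rw [he1] at this
        rw [abs_le]
        constructor <;> nlinarith [ha0p]
    exact key
  -- the stable radius r3
  obtain ⟨r3a, hr3ap, hr3a⟩ := hfmod (r2/2) (by positivity)
  set r3 := min r3a (r2/2) with hr3_def
  have hr3p : 0 < r3 := lt_min hr3ap (by positivity)
  have hr3r2 : r3 ≤ r2/2 := min_le_right _ _
  have hstay : ∀ x y : X, dist x y ≤ r3 → ∀ u : ℝ, |u| ≤ 9 →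
      dist (φ u x) (φ u y) ≤ r2/2 :=
    fun x y h u hu => hr3a x y (h.trans (min_le_left _ _)) u hu
  clear_value r3
  -- path continuity
  have hpath : ∀ x y : X, dist x y ≤ r3 →
      ContinuousOn (fun u => l (φ u x) (φ u y)) (Icc (-9:ℝ) 9) := by
    intro x y hxy
    rw [Metric.continuousOn_iff]
    intro u hu ε hε
    obtain ⟨δ1, hδ1p, hδ1⟩ := hl_mod (ε/2) (by positivity)
    obtain ⟨δ2, hδ2p, hδ2⟩ := Stmt1Aux.unifFlow φ hc δ1 hδ1p
    refine ⟨δ2, hδ2p, ?_⟩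
    intro v hv hvu
    have hv9 : |v| ≤ 9 := abs_le.mpr ⟨hv.1, hv.2⟩
    have hu9 : |u| ≤ 9 := abs_le.mpr ⟨hu.1, hu.2⟩
    have hvu' : |v - u| ≤ δ2 := by rw [Real.dist_eq] at hvu; exact hvu.le
    have h1 : dist (φ v x) (φ u x) ≤ δ1 := hδ2 v u x x hv9 hu9 hvu' (by simp; linarith)
    have h2 : dist (φ v y) (φ u y) ≤ δ1 := hδ2 v u y y hv9 hu9 hvu' (by simp; linarith)
    have dom1 : dist (φ v x) (φ v y) ≤ r2 := (hstay x y hxy v hv9).trans (by linarith)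
    have dom2 : dist (φ u x) (φ u y) ≤ r2 := (hstay x y hxy u hu9).trans (by linarith)
    have := hδ1 (φ v x) (φ v y) (φ u x) (φ u y) dom1 dom2 h1 h2
    rw [Real.dist_eq]
    calc |l (φ v x) (φ v y) - l (φ u x) (φ u y)| ≤ ε/2 := this
      _ < ε := by linarith
  -- integrability of paths
  have hintl : ∀ x y : X, dist x y ≤ r3 → ∀ a b : ℝ, -9 ≤ a → a ≤ b → b ≤ 9 →
      IntervalIntegrable (fun u => l (φ u x) (φ u y)) MeasureTheory.volume a b := by
    intro x y h a b ha hab hb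
    apply ContinuousOn.intervalIntegrable
    apply (hpath x y h).mono
    rw [uIcc_of_le hab]
    intro u hu
    exact ⟨by linarith [hu.1], by linarith [hu.2]⟩
  -- the averaged time function
  set T := 4*t1 with hT_def
  have hTp : 0 < T := by rw [hT_def]; positivity
  have hT1 : T ≤ 1 := by
    rw [hT_def]; linarith [ht1lam, hlam1]
  set Lb : X → X → ℝ := fun x y =>
    if dist x y ≤ r3 then (1/T) * ∫ u in (0:ℝ)..T, l (φ u x) (φ u y) else 0 with hLb_def
  have hLb_eq : ∀ x y : X, dist x y ≤ r3 →
      Lb x y = (1/T) * ∫ u in (0:ℝ)..T, l (φ u x) (φ u y) := by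
    intro x y h
    simp only [hLb_def, if_pos h]
  clear_value Lb
  have hLb_self : ∀ x : X, Lb x x = 0 := by
    intro x
    rw [hLb_eq x x (by simp [hr3p.le])]
    have : ∀ u : ℝ, l (φ u x) (φ u x) = 0 := fun u => hl_self (φ u x)
    simp [this]
  -- small time scale t2
  obtain ⟨t2a, ht2ap, ht2a1, ht2a⟩ := hdisp (r2/2) (by positivity)
  set t2 := min t2a (t1/4) with ht2_def
  have ht2p : 0 < t2 := lt_min ht2ap (by positivity)
  have ht2t1 : t2 ≤ t1/4 := min_le_right _ _
  have hdisp2 : ∀ (z : X) (v : ℝ), |v| ≤ t2 → dist (φ v z) z ≤ r2/2 :=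
    fun z v hv => ht2a z v (hv.trans (min_le_left _ _))
  clear_value t2
  have ht19 : t1 ≤ 1/4 := by linarith [ht1lam, hlam1]
  -- the exact shift identity for Lb
  have hLb_shift : ∀ (x y : X) (t : ℝ), dist x y ≤ r3 → dist x (φ t y) ≤ r3 → |t| ≤ t2 →
      Lb x (φ t y) = Lb x y + t := by
    intro x y t hxy hxz ht
    rw [hLb_eq x (φ t y) hxz, hLb_eq x y hxy]
    have hpt : EqOn (fun u => l (φ u x) (φ u (φ t y))) (fun u => l (φ u x) (φ u y) + t)
        (uIcc (0:ℝ) T) := by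
      intro u hu
      rw [uIcc_of_le hTp.le] at hu
      have hu9 : |u| ≤ 9 := by rw [abs_of_nonneg hu.1]; linarith [hu.2]
      have e : φ u (φ t y) = φ t (φ u y) := by rw [← hadd, add_comm, hadd]
      simp only
      rw [e]
      apply hl_shift
      · exact (hstay x y hxy u hu9).trans (by linarith)
      · calc dist (φ u x) (φ t (φ u y))
            ≤ dist (φ u x) (φ u y) + dist (φ u y) (φ t (φ u y)) := dist_triangle _ _ _
          _ ≤ r2/2 + r2/2 := by
              refine add_le_add ((hstay x y hxy u hu9)) ?_
              rw [dist_comm]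
              exact hdisp2 (φ u y) t ht
          _ = r2 := by ring
      · linarith [ht2t1, ht]
    rw [intervalIntegral.integral_congr hpt]
    rw [intervalIntegral.integral_add (hintl x y hxy 0 T (by norm_num) hTp.le (by linarith))
        intervalIntegrable_const]
    rw [intervalIntegral.integral_const, smul_eq_mul, sub_zero, mul_add]
    rw [show (1/T)*(T*t) = t by field_simp]
  -- the approximate equivariance (drift) identity
  have hLb_drift : ∀ (x z : X) (s : ℝ), dist x z ≤ r3 → dist (φ s x) z ≤ r3 →
      0 ≤ s → s ≤ t2 → |Lb (φ s x) z - (Lb x z - s)| ≤ s/2 := by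
    intro x z s h1 h2 hs0 hs2
    have hst1 : s ≤ 1 := by linarith [ht2t1, ht19]
    rw [hLb_eq (φ s x) z h2, hLb_eq x z h1]
    have hpt : EqOn (fun u => l (φ u (φ s x)) (φ u z))
        (fun u => l (φ (u+s) x) (φ (u+s) z) - s) (uIcc (0:ℝ) T) := by
      intro u hu
      rw [uIcc_of_le hTp.le] at hu
      have hus9 : |u+s| ≤ 9 := by
        rw [abs_of_nonneg (by linarith [hu.1] : (0:ℝ) ≤ u+s)]; linarith [hu.2, hT1]
      have e1 : φ u (φ s x) = φ (u+s) x := (hadd u s x).symm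
      have e2 : φ u z = φ (-s) (φ (u+s) z) := by
        rw [← hadd, show -s + (u+s) = u by ring]
      simp only
      rw [e1, e2]
      have dom1 : dist (φ (u+s) x) (φ (u+s) z) ≤ r2/2 := hstay x z h1 (u+s) hus9
      have dom2 : dist (φ (u+s) x) (φ (-s) (φ (u+s) z)) ≤ r2 := by
        have hdz : dist (φ (-s) (φ (u+s) z)) (φ (u+s) z) ≤ r2/2 :=
          hdisp2 _ (-s) (by rw [abs_neg, abs_of_nonneg hs0]; exact hs2)
        calc dist (φ (u+s) x) (φ (-s) (φ (u+s) z))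
            ≤ dist (φ (u+s) x) (φ (u+s) z) + dist (φ (u+s) z) (φ (-s) (φ (u+s) z)) :=
              dist_triangle _ _ _
          _ ≤ r2/2 + r2/2 := by
              refine add_le_add dom1 ?_
              rw [dist_comm]; exact hdz
          _ = r2 := by ring
      have hsh := hl_shift (φ (u+s) x) (φ (u+s) z) (-s) (dom1.trans (by linarith)) dom2
        (by rw [abs_neg, abs_of_nonneg hs0]; linarith [ht2t1])
      rw [hsh]; ring
    rw [intervalIntegral.integral_congr hpt]
    have hig : IntervalIntegrable (fun u => l (φ (u+s) x) (φ (u+s) z))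
        MeasureTheory.volume 0 T := by
      have hcomp : ContinuousOn (fun u : ℝ => l (φ (u+s) x) (φ (u+s) z)) (Icc 0 T) := by
        apply ContinuousOn.comp (hpath x z h1)
          ((continuous_id.add continuous_const).continuousOn)
        intro u hu
        rw [mem_Icc] at hu
        simp only [mem_Icc, id_eq, Pi.add_apply]
        exact ⟨by linarith [hu.1], by linarith [hu.2, hT1]⟩
      exact ContinuousOn.intervalIntegrable (hcomp.mono (by rw [uIcc_of_le hTp.le]))
    rw [intervalIntegral.integral_sub hig intervalIntegrable_const]
    rw [intervalIntegral.integral_const, smul_eq_mul, sub_zero]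
    rw [intervalIntegral.integral_comp_add_right (fun v => l (φ v x) (φ v z)) s, zero_add]
    have i1 : IntervalIntegrable (fun v => l (φ v x) (φ v z)) MeasureTheory.volume 0 s :=
      hintl x z h1 0 s (by norm_num) hs0 (by linarith)
    have i2 : IntervalIntegrable (fun v => l (φ v x) (φ v z)) MeasureTheory.volume s T :=
      hintl x z h1 s T (by linarith) (by linarith [ht2t1]) (by linarith)
    have i3 : IntervalIntegrable (fun v => l (φ v x) (φ v z)) MeasureTheory.volume T (T+s) :=
      hintl x z h1 T (T+s) (by linarith) (by linarith) (by linarith)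
    have e1 := intervalIntegral.integral_add_adjacent_intervals i1 i2
    have e2 := intervalIntegral.integral_add_adjacent_intervals i2 i3
    have b1 : |∫ v in (0:ℝ)..s, l (φ v x) (φ v z)| ≤ (t1/2)*s := by
      have hle := intervalIntegral.norm_integral_le_of_norm_le_const (C := t1/2)
        (f := fun v => l (φ v x) (φ v z)) (a := 0) (b := s)
        (fun u _ => by rw [Real.norm_eq_abs]; exact hl_bd _ _)
      rwa [Real.norm_eq_abs, sub_zero, abs_of_nonneg hs0] at hle
    have b2 : |∫ v in T..(T+s), l (φ v x) (φ v z)| ≤ (t1/2)*s := by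
      have hle := intervalIntegral.norm_integral_le_of_norm_le_const (C := t1/2)
        (f := fun v => l (φ v x) (φ v z)) (a := T) (b := T+s)
        (fun u _ => by rw [Real.norm_eq_abs]; exact hl_bd _ _)
      rwa [Real.norm_eq_abs, show T + s - T = s by ring, abs_of_nonneg hs0] at hle
    have heq : (∫ v in s..(T+s), l (φ v x) (φ v z)) =
        (∫ v in (0:ℝ)..T, l (φ v x) (φ v z)) - (∫ v in (0:ℝ)..s, l (φ v x) (φ v z))
        + (∫ v in T..(T+s), l (φ v x) (φ v z)) := by linarith
    rw [heq]
    have hTne : T ≠ 0 := hTp.ne'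
    have hfin : (1/T)*(((∫ v in (0:ℝ)..T, l (φ v x) (φ v z))
        - (∫ v in (0:ℝ)..s, l (φ v x) (φ v z))
        + (∫ v in T..(T+s), l (φ v x) (φ v z))) - (T-0)*s)
        - ((1/T)*(∫ v in (0:ℝ)..T, l (φ v x) (φ v z)) - s)
        = (1/T)*((∫ v in T..(T+s), l (φ v x) (φ v z))
          - (∫ v in (0:ℝ)..s, l (φ v x) (φ v z))) := by
      field_simp
      ring
    rw [show (T-0)*s = T*s by ring] at hfin
    rw [hfin]
    rw [abs_mul, abs_of_pos (show (0:ℝ) < 1/T by positivity)]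
    obtain ⟨b1a, b1b⟩ := abs_le.mp b1
    obtain ⟨b2a, b2b⟩ := abs_le.mp b2
    have habs : |(∫ v in T..(T+s), l (φ v x) (φ v z))
        - (∫ v in (0:ℝ)..s, l (φ v x) (φ v z))| ≤ t1*s := by
      rw [abs_le]; constructor <;> linarith
    calc (1/T) * |(∫ v in T..(T+s), l (φ v x) (φ v z))
        - (∫ v in (0:ℝ)..s, l (φ v x) (φ v z))| ≤ (1/T)*(t1*s) := by
          apply mul_le_mul_of_nonneg_left habs (by positivity)
      _ = s/4 := by rw [hT_def]; field_simp
      _ ≤ s/2 := by linarith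
  -- modulus of continuity of Lb
  have hLb_mod : ∀ ε > (0:ℝ), ∃ δ > (0:ℝ), ∀ x y x' y' : X, dist x y ≤ r3 →
      dist x' y' ≤ r3 → dist x x' ≤ δ → dist y y' ≤ δ → |Lb x y - Lb x' y'| ≤ ε := by
    intro ε hε
    obtain ⟨δ1, hδ1p, hδ1⟩ := hl_mod ε hε
    obtain ⟨δ2, hδ2p, hδ2⟩ := hfmod δ1 hδ1p
    refine ⟨δ2, hδ2p, ?_⟩
    intro x y x' y' hxy hxy' hxx hyy
    rw [hLb_eq x y hxy, hLb_eq x' y' hxy']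
    have hint1 := hintl x y hxy 0 T (by norm_num) hTp.le (by linarith)
    have hint2 := hintl x' y' hxy' 0 T (by norm_num) hTp.le (by linarith)
    rw [← mul_sub, ← intervalIntegral.integral_sub hint1 hint2]
    rw [abs_mul, abs_of_pos (show (0:ℝ) < 1/T by positivity)]
    have hb : |∫ u in (0:ℝ)..T, (l (φ u x) (φ u y) - l (φ u x') (φ u y'))| ≤ ε*T := by
      have hle := intervalIntegral.norm_integral_le_of_norm_le_const (C := ε)
        (f := fun u => l (φ u x) (φ u y) - l (φ u x') (φ u y')) (a := 0) (b := T) ?_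
      · rwa [Real.norm_eq_abs, sub_zero, abs_of_pos hTp] at hle
      · intro u hu
        rw [Set.uIoc_of_le hTp.le] at hu
        have hu9 : |u| ≤ 9 := by
          rw [abs_of_nonneg hu.1.le]; linarith [hu.2]
        rw [Real.norm_eq_abs]
        exact hδ1 (φ u x) (φ u y) (φ u x') (φ u y')
          ((hstay x y hxy u hu9).trans (by linarith))
          ((hstay x' y' hxy' u hu9).trans (by linarith))
          (hδ2 x x' hxx u hu9) (hδ2 y y' hyy u hu9)
    calc (1/T) * |∫ u in (0:ℝ)..T, (l (φ u x) (φ u y) - l (φ u x') (φ u y'))|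
        ≤ (1/T)*(ε*T) := by apply mul_le_mul_of_nonneg_left hb (by positivity)
      _ = ε := by field_simp
  -- final constants
  set rho := r3/3 with hrho_def
  have hrhop : 0 < rho := by rw [hrho_def]; positivity
  have hrhor3 : rho ≤ r3/3 := hrho_def.le
  obtain ⟨t3a, ht3ap, ht3a1, ht3a⟩ := hdisp (rho/2) (by positivity)
  set t3 := min t3a t2 with ht3_def
  have ht3p : 0 < t3 := lt_min ht3ap ht2p
  have ht3t2 : t3 ≤ t2 := min_le_right _ _
  have hdisp3 : ∀ (z : X) (v : ℝ), |v| ≤ t3 → dist (φ v z) z ≤ rho/2 :=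
    fun z v hv => ht3a z v (hv.trans (min_le_left _ _))
  clear_value t3
  obtain ⟨dnb, hdnbp, hdnb⟩ := hLb_mod t3 ht3p
  set rnb := min (min (rho/2) dnb) r3 with hrnb_def
  have hrnbp : 0 < rnb := lt_min (lt_min (by positivity) hdnbp) hr3p
  have hrnbrho : rnb ≤ rho/2 := le_trans (min_le_left _ _) (min_le_left _ _)
  have hrnbd : rnb ≤ dnb := le_trans (min_le_left _ _) (min_le_right _ _)
  clear_value rnb
  -- the field of cross sections
  set H : X → Set X := fun x => {y | dist y x ≤ rho ∧ Lb x y = 0} with hH_def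
  have hHmem : ∀ x y : X, y ∈ H x ↔ (dist y x ≤ rho ∧ Lb x y = 0) := by
    intro x y; simp [hH_def]
  have hHself : ∀ x : X, x ∈ H x := by
    intro x
    rw [hHmem]
    exact ⟨by simp [hrhop.le], hLb_self x⟩
  -- continuity of Lb x · on balls
  have hLbContOn : ∀ (x : X) (R : ℝ), R ≤ r3 → ContinuousOn (fun y => Lb x y) (closedBall x R) := by
    intro x R hR
    rw [Metric.continuousOn_iff]
    intro y hy ε hε
    obtain ⟨δ, hδp, hδ⟩ := hLb_mod (ε/2) (by positivity)
    refine ⟨δ, hδp, ?_⟩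
    intro y' hy' hyy'
    have d1 : dist x y' ≤ r3 := by
      rw [dist_comm]; exact (mem_closedBall.mp hy').trans hR
    have d2 : dist x y ≤ r3 := by
      rw [dist_comm]; exact (mem_closedBall.mp hy).trans hR
    have := hδ x y' x y d1 d2 (by simp [hδp.le]) hyy'.le
    rw [Real.dist_eq]
    exact lt_of_le_of_lt this (by linarith)
  have hHclosed : ∀ (x : X) (R : ℝ), 0 ≤ R → R ≤ r3 →
      IsClosed {y : X | dist y x ≤ R ∧ Lb x y = 0} := by
    intro x R hR0 hR
    have he : {y : X | dist y x ≤ R ∧ Lb x y = 0}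
        = closedBall x R ∩ (fun y => Lb x y) ⁻¹' {0} := by
      ext y
      simp [mem_closedBall, mem_setOf_eq]
    rw [he]
    exact (hLbContOn x R hR).preimage_isClosed_of_isClosed Metric.isClosed_closedBall
      isClosed_singleton
  have hHcompact : ∀ x : X, IsCompact (H x) := by
    intro x
    have : H x = {y : X | dist y x ≤ rho ∧ Lb x y = 0} := by rw [hH_def]
    rw [this]
    exact (hHclosed x rho hrhop.le (by linarith)).isCompact
  -- semicontinuity of H
  have hHsemi : ∀ x : X, ∀ ε > (0:ℝ), ∃ δ > (0:ℝ), ∀ y : X, dist x y < δ →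
      H y ⊆ ballSet ε (H x) := by
    intro x ε hε
    set V : ℕ → Set X := fun n => {w : X | dist w x ≤ rho + rho/(n+1) ∧ Lb x w = 0}
      with hV_def
    have hrn : ∀ n : ℕ, (0:ℝ) < rho/(n+1) := by
      intro n; positivity
    have hrle : ∀ n : ℕ, rho + rho/(n+1) ≤ r3 := by
      intro n
      have h1 : rho/((n:ℝ)+1) ≤ rho := by
        rw [div_le_iff₀ (by positivity)]
        nlinarith [hrhop.le, Nat.cast_nonneg (α := ℝ) n]
      linarith [hrhor3]
    have hVclosed : ∀ n, IsClosed (V n) := by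
      intro n
      exact hHclosed x _ (by positivity) (hrle n)
    have hVcompact : ∀ n, IsCompact (V n) := fun n => (hVclosed n).isCompact
    have hVmono : ∀ m n : ℕ, m ≤ n → V n ⊆ V m := by
      intro m n hmn w hw
      obtain ⟨hw1, hw2⟩ := hw
      refine ⟨hw1.trans ?_, hw2⟩
      have h1 : ((m:ℝ)+1) ≤ ((n:ℝ)+1) := by exact_mod_cast Nat.succ_le_succ hmn
      have h2 := div_le_div_of_nonneg_left hrhop.le
        (by positivity : (0:ℝ) < (m:ℝ)+1) h1
      linarith [h2]
    have hVdir : Directed (· ⊇ ·) V := fun m n =>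
      ⟨max m n, hVmono m (max m n) (le_max_left _ _), hVmono n (max m n) (le_max_right _ _)⟩
    have hU : ∀ p ∈ ⋂ n, V n, (⋃ w ∈ H x, ball w (ε/2)) ∈ 𝓝 p := by
      intro p hp
      have hpH : p ∈ H x := by
        rw [hHmem]
        have h2 : Lb x p = 0 := (mem_iInter.mp hp 0).2
        refine ⟨?_, h2⟩
        apply le_of_forall_pos_le_add
        intro η hη
        obtain ⟨n, hn⟩ := exists_nat_one_div_lt (show 0 < η/rho by positivity)
        have h3 := (mem_iInter.mp hp n).1
        have hpos : (0:ℝ) < (n:ℝ)+1 := by positivity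
        have h5 : rho * (1/((n:ℝ)+1)) ≤ rho * (η/rho) :=
          mul_le_mul_of_nonneg_left hn.le hrhop.le
        rw [mul_one_div, mul_div_cancel₀ η hrhop.ne'] at h5
        linarith
      exact Filter.mem_of_superset (ball_mem_nhds p (show (0:ℝ) < ε/2 by positivity))
        (subset_biUnion_of_mem (u := fun w => ball w (ε/2)) hpH)
    obtain ⟨n0, hn0⟩ := exists_subset_nhds_of_isCompact' hVdir hVcompact hVclosed hU
    set η := rho/(n0+1) with hη_def
    have hηp : 0 < η := hrn n0
    have hηrho : η ≤ rho := by
      rw [hη_def, div_le_iff₀ (by positivity)]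
      nlinarith [hrhop.le, Nat.cast_nonneg (α := ℝ) n0]
    obtain ⟨t4a, ht4ap, ht4a1, ht4a⟩ := hdisp (min (ε/2) (η/2)) (by positivity)
    set t4 := min t4a t2 with ht4_def
    have ht4p : 0 < t4 := lt_min ht4ap ht2p
    have ht4t2 : t4 ≤ t2 := min_le_right _ _
    have hdisp4 : ∀ (z : X) (v : ℝ), |v| ≤ t4 → dist (φ v z) z ≤ min (ε/2) (η/2) :=
      fun z v hv => ht4a z v (hv.trans (min_le_left _ _))
    obtain ⟨δ1, hδ1p, hδ1⟩ := hLb_mod t4 ht4p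
    refine ⟨min (min δ1 (η/2)) rho, by positivity, ?_⟩
    intro y hxy z hz
    rw [hHmem] at hz
    obtain ⟨hz1, hz2⟩ := hz
    have hxyδ : dist x y ≤ min (min δ1 (η/2)) rho := hxy.le
    have hxyrho : dist x y ≤ rho := hxyδ.trans (min_le_right _ _)
    have hxyδ1 : dist x y ≤ δ1 := hxyδ.trans ((min_le_left _ _).trans (min_le_left _ _))
    have hxyη : dist x y ≤ η/2 := hxyδ.trans ((min_le_left _ _).trans (min_le_right _ _))
    have hdxz : dist x z ≤ 2*rho := by
      calc dist x z ≤ dist x y + dist y z := dist_triangle _ _ _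
        _ ≤ rho + rho := by
            refine add_le_add hxyrho ?_
            rw [dist_comm]; exact hz1
        _ = 2*rho := by ring
    have hdxzr3 : dist x z ≤ r3 := by
      have : 2*rho ≤ r3 := by rw [hrho_def]; linarith
      linarith
    have hdyz : dist y z ≤ r3 := by
      rw [dist_comm]
      exact hz1.trans (by rw [hrho_def]; linarith)
    have htz : |Lb x z| ≤ t4 := by
      have := hδ1 x z y z hdxzr3 hdyz hxyδ1 (by simp [hδ1p.le])
      rwa [hz2, sub_zero] at this
    have hdisp4' : dist (φ (-(Lb x z)) z) z ≤ min (ε/2) (η/2) :=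
      hdisp4 z (-(Lb x z)) (by rwa [abs_neg])
    have hsh := hLb_shift x z (-(Lb x z)) hdxzr3 ?_ (by rw [abs_neg]; exact htz.trans ht4t2)
    swap
    · calc dist x (φ (-(Lb x z)) z) ≤ dist x z + dist z (φ (-(Lb x z)) z) := dist_triangle _ _ _
        _ ≤ 2*rho + η/2 := by
            refine add_le_add hdxz ?_
            rw [dist_comm]
            exact hdisp4'.trans (min_le_right _ _)
        _ ≤ r3 := by
            rw [hrho_def] at *
            have : η ≤ r3/3 := hηrho
            linarith
    have hz'V : φ (-(Lb x z)) z ∈ V n0 := by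
      refine ⟨?_, by rw [hsh]; ring⟩
      calc dist (φ (-(Lb x z)) z) x ≤ dist (φ (-(Lb x z)) z) z + dist z x := dist_triangle _ _ _
        _ ≤ η/2 + (rho + η/2) := by
            refine add_le_add (hdisp4'.trans (min_le_right _ _)) ?_
            calc dist z x ≤ dist z y + dist y x := dist_triangle _ _ _
              _ ≤ rho + η/2 := by
                  refine add_le_add hz1 ?_
                  rw [dist_comm]; exact hxyη
        _ = rho + η := by ring
    have hz'U := hn0 hz'V
    obtain ⟨w, hwH, hwball⟩ := mem_iUnion₂.mp hz'U
    refine mem_iUnion₂.mpr ⟨w, hwH, mem_closedBall.mpr ?_⟩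
    calc dist z w ≤ dist z (φ (-(Lb x z)) z) + dist (φ (-(Lb x z)) z) w := dist_triangle _ _ _
      _ ≤ ε/2 + ε/2 := by
          refine add_le_add ?_ (le_of_lt (mem_ball.mp hwball))
          rw [dist_comm]
          exact hdisp4'.trans (min_le_left _ _)
      _ = ε := by ring
  -- flowSat as an image
  have hsatim : ∀ x : X, flowSat φ (Icc (-t2) t2) H x
      = (fun p : ℝ × X => φ p.1 p.2) '' ((Icc (-t2) t2) ×ˢ (H x)) := by
    intro x
    ext z
    simp only [flowSat, mem_setOf_eq, Set.mem_image, Set.mem_prod, Prod.exists]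
    constructor
    · rintro ⟨t, ht, y, hy, rfl⟩
      exact ⟨t, y, ⟨ht, hy⟩, rfl⟩
    · rintro ⟨t, y, ⟨ht, hy⟩, rfl⟩
      exact ⟨t, ht, y, hy, rfl⟩
  have hsatcomp : ∀ x : X, IsCompact (flowSat φ (Icc (-t2) t2) H x) := by
    intro x
    rw [hsatim]
    exact (isCompact_Icc.prod (hHcompact x)).image hc
  have hsatself : ∀ x : X, x ∈ flowSat φ (Icc (-t2) t2) H x :=
    fun x => ⟨0, ⟨by linarith [ht2p], by linarith [ht2p]⟩, x, hHself x, (h0 x).symm⟩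
  have ht29 : t2 ≤ 9 := by linarith [ht2t1, ht19]
  have hsatsemi : ∀ x : X, ∀ ε > (0:ℝ), ∃ δ > (0:ℝ), ∀ y : X, dist x y < δ →
      flowSat φ (Icc (-t2) t2) H y ⊆ ballSet ε (flowSat φ (Icc (-t2) t2) H x) := by
    intro x ε hε
    obtain ⟨δe, hδep, hδe⟩ := hfmod ε hε
    obtain ⟨δ, hδp, hδ⟩ := hHsemi x δe hδep
    refine ⟨δ, hδp, ?_⟩
    intro y hy z hz
    obtain ⟨t, htI, w, hw, rfl⟩ := hz
    have hwb := hδ y hy hw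
    obtain ⟨w', hw', hwd⟩ := mem_iUnion₂.mp hwb
    have habs : |t| ≤ 9 := by
      rw [abs_le]; exact ⟨by linarith [htI.1], by linarith [htI.2]⟩
    have hd := hδe w w' (mem_closedBall.mp hwd) t habs
    exact mem_iUnion₂.mpr ⟨φ t w', ⟨t, htI, w', hw', rfl⟩, mem_closedBall.mpr hd⟩
  -- the neighborhood radius
  have hnbhd : ∀ x : X, closedBall x rnb ⊆ flowSat φ (Icc (-t2) t2) H x := by
    intro x z hz
    have hdzx : dist z x ≤ rnb := mem_closedBall.mp hz
    have hdxz : dist x z ≤ rnb := by rw [dist_comm]; exact hdzx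
    have hxzr3 : dist x z ≤ r3 := by linarith [hrnbrho, hrhor3, hr3p]
    have htz : |Lb x z| ≤ t3 := by
      have := hdnb x z x x hxzr3 (by simp [hr3p.le]) (by simp [hdnbp.le]) (hdzx.trans hrnbd)
      rwa [hLb_self, sub_zero] at this
    have hd3 : dist (φ (-(Lb x z)) z) z ≤ rho/2 := hdisp3 z _ (by rwa [abs_neg])
    have hdom2 : dist x (φ (-(Lb x z)) z) ≤ r3 := by
      calc dist x (φ (-(Lb x z)) z) ≤ dist x z + dist z (φ (-(Lb x z)) z) :=
            dist_triangle _ _ _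
        _ ≤ rho/2 + rho/2 := add_le_add (hdxz.trans hrnbrho) (by rw [dist_comm]; exact hd3)
        _ ≤ r3 := by linarith [hrhor3, hr3p]
    have hsh := hLb_shift x z (-(Lb x z)) hxzr3 hdom2 (by rw [abs_neg]; exact htz.trans ht3t2)
    obtain ⟨htza, htzb⟩ := abs_le.mp htz
    refine ⟨Lb x z, ⟨by linarith [ht3t2], by linarith [ht3t2]⟩, φ (-(Lb x z)) z, ?_, ?_⟩
    · rw [hHmem]
      constructor
      · calc dist (φ (-(Lb x z)) z) x ≤ dist (φ (-(Lb x z)) z) z + dist z x :=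
              dist_triangle _ _ _
          _ ≤ rho/2 + rho/2 := add_le_add hd3 (hdzx.trans hrnbrho)
          _ = rho := by ring
      · rw [hsh]; ring
    · rw [← hadd, add_neg_cancel, h0]
  -- the section property
  have hsect : ∀ x : X, ∀ y ∈ H x, H x ∩ {z | ∃ t : ℝ, |t| ≤ t2 ∧ z = φ t y} = {y} := by
    intro x y hy
    rw [hHmem] at hy
    obtain ⟨hy1, hy2⟩ := hy
    apply Set.eq_singleton_iff_unique_mem.mpr
    constructor
    · exact ⟨(hHmem x y).mpr ⟨hy1, hy2⟩, 0, by simp [ht2p.le], (h0 y).symm⟩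
    · rintro z ⟨hzH, t, ht, rfl⟩
      rw [hHmem] at hzH
      obtain ⟨hz1, hz2⟩ := hzH
      have hxy3 : dist x y ≤ r3 := by
        rw [dist_comm]; exact hy1.trans (by linarith [hrhor3, hr3p])
      have hxz3 : dist x (φ t y) ≤ r3 := by
        rw [dist_comm]; exact hz1.trans (by linarith [hrhor3, hr3p])
      have hsh := hLb_shift x y t hxy3 hxz3 ht
      rw [hz2, hy2] at hsh
      have htzero : t = 0 := by linarith
      rw [htzero, h0]
  -- monotonicity
  have hmono : ∀ x : X, ∀ t ∈ Ioo (0:ℝ) t2, H x ∩ H (φ t x) = ∅ := by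
    intro x t ht
    rw [Set.eq_empty_iff_forall_notMem]
    rintro z ⟨hz1, hz2⟩
    rw [hHmem] at hz1 hz2
    obtain ⟨hza, hzb⟩ := hz1
    obtain ⟨hzc, hzd⟩ := hz2
    have h1 : dist x z ≤ r3 := by
      rw [dist_comm]; exact hza.trans (by linarith [hrhor3, hr3p])
    have h2 : dist (φ t x) z ≤ r3 := by
      rw [dist_comm]; exact hzc.trans (by linarith [hrhor3, hr3p])
    have hdr := hLb_drift x z t h1 h2 ht.1.le ht.2.le
    rw [hzb, hzd] at hdr
    rw [show (0:ℝ) - ((0:ℝ) - t) = t by ring] at hdr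
    rw [abs_of_pos ht.1] at hdr
    linarith [ht.1]
  exact ⟨H, ⟨⟨hHcompact, hHself, hHsemi⟩, t2, ht2p,
    ⟨⟨hsatcomp, hsatself, hsatsemi⟩, rnb, hrnbp, hnbhd⟩, hsect⟩, t2, ht2p, hmono⟩
end

section
/- For a compact metric space X the following statements are equivalent: (1) there exists a one-parameter field of neighborhoods N : [0,1] × X → (nonempty compact subsets of X with the Hausdorff metric) such that N_r(x) is connected for every r ∈ [0,1] and x ∈ X; (2) X is a Peano continuum. -/
open Set Metric Filter Topology

universe u

set_option linter.unusedSectionVars false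
set_option maxHeartbeats 1000000

namespace Stmt5P
open TopologicalSpace

noncomputable def MM (X : Type u) [MetricSpace X] : ℝ := diam (univ : Set X) + 1

variable {X : Type u} [MetricSpace X] [CompactSpace X] [Nonempty X]

noncomputable def muf (K : Set X) (n : ℕ) : ℝ :=
  (2:ℝ)⁻¹ ^ n * (MM X - infDist (denseSeq X n) K)

noncomputable def mu (K : Set X) : ℝ := ∑' n : ℕ, muf K n

lemma infDist_le_MM (p : X) {K : Set X} (hK : K.Nonempty) :
    infDist p K ≤ MM X - 1 := by
  obtain ⟨k, hk⟩ := hK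
  calc infDist p K ≤ dist p k := infDist_le_dist_of_mem hk
  _ ≤ diam (univ : Set X) := dist_le_diam_of_mem isCompact_univ.isBounded trivial trivial
  _ = MM X - 1 := by simp [MM]

lemma MM_pos : (0:ℝ) < MM X := by
  have := diam_nonneg (s := (univ : Set X)); unfold MM; linarith

lemma muf_nonneg {K : Set X} (hK : K.Nonempty) (n : ℕ) : 0 ≤ muf K n := by
  have h1 := infDist_le_MM (denseSeq X n) hK
  have : (0:ℝ) ≤ (2:ℝ)⁻¹ ^ n := by positivity
  have : (0:ℝ) ≤ MM X - infDist (denseSeq X n) K := by linarith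
  unfold muf; positivity

lemma muf_le {K : Set X} (n : ℕ) : muf K n ≤ (2:ℝ)⁻¹ ^ n * MM X := by
  have h2 := infDist_nonneg (s := K) (x := denseSeq X n)
  have h3 : (0:ℝ) ≤ (2:ℝ)⁻¹ ^ n := by positivity
  unfold muf; nlinarith

lemma summable_geom_mul (c : ℝ) : Summable (fun n : ℕ => (2:ℝ)⁻¹ ^ n * c) := by
  exact (summable_geometric_of_lt_one (by norm_num) (by norm_num)).mul_right c

lemma muf_summable {K : Set X} (hK : K.Nonempty) : Summable (muf K) := by
  refine Summable.of_nonneg_of_le (muf_nonneg hK) (fun n => muf_le n) (summable_geom_mul (MM X))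

lemma tsum_geom_mul (c : ℝ) : ∑' n : ℕ, (2:ℝ)⁻¹ ^ n * c = 2 * c := by
  rw [tsum_mul_right, tsum_geometric_of_lt_one (by norm_num) (by norm_num)]
  norm_num

lemma mu_mono {A B : Set X} (hA : A.Nonempty) (hAB : A ⊆ B) : mu A ≤ mu B := by
  refine Summable.tsum_le_tsum (fun n => ?_) (muf_summable hA) (muf_summable (hA.mono hAB))
  have := infDist_le_infDist_of_subset hAB hA (x := denseSeq X n)
  have h3 : (0:ℝ) ≤ (2:ℝ)⁻¹ ^ n := by positivity
  unfold muf; nlinarith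

lemma mu_lt {A B : Set X} (hA : A.Nonempty) (hB : IsClosed A) (hAB : A ⊆ B) (hBc : IsCompact B)
    (hne : A ≠ B) : mu A < mu B := by
  obtain ⟨b, hbB, hbA⟩ : ∃ b ∈ B, b ∉ A := by
    by_contra h; push_neg at h; exact hne (hAB.antisymm h)
  have hr : 0 < infDist b A := by
    have h0 : ¬ infDist b A = 0 := by
      rw [← hB.closure_eq, mem_closure_iff_infDist_zero hA] at hbA; exact hbA
    exact lt_of_le_of_ne infDist_nonneg (Ne.symm h0)
  obtain ⟨n, hn⟩ : ∃ n : ℕ, dist (denseSeq X n) b < infDist b A / 3 := by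
    have hd := denseRange_denseSeq X
    obtain ⟨n, hn⟩ := hd.exists_dist_lt b (show (0:ℝ) < infDist b A / 3 by linarith)
    exact ⟨n, by rwa [dist_comm] at hn⟩
  refine Summable.tsum_lt_tsum (i := n) (fun m => ?_) ?_ (muf_summable hA) (muf_summable ⟨b, hbB⟩)
  · have := infDist_le_infDist_of_subset hAB hA (x := denseSeq X m)
    have h3 : (0:ℝ) ≤ (2:ℝ)⁻¹ ^ m := by positivity
    unfold muf; nlinarith
  · have h1 : infDist (denseSeq X n) B ≤ infDist b A / 3 :=
      le_trans (infDist_le_dist_of_mem hbB) hn.le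
    have h2 : infDist b A - infDist b A / 3 ≤ infDist (denseSeq X n) A := by
      have := infDist_le_infDist_add_dist (x := b) (y := denseSeq X n) (s := A)
      rw [dist_comm] at hn; linarith
    have h3 : (0:ℝ) < (2:ℝ)⁻¹ ^ n := by positivity
    unfold muf; nlinarith

lemma hD_ne_top {A B : Set X} (hA : A.Nonempty) (hB : B.Nonempty) :
    EMetric.hausdorffEdist A B ≠ ⊤ :=
  hausdorffEdist_ne_top_of_nonempty_of_bounded hA hB
    (isCompact_univ.isBounded.subset (subset_univ A))
    (isCompact_univ.isBounded.subset (subset_univ B))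

lemma mu_le_hD {A B : Set X} (hA : A.Nonempty) (hB : B.Nonempty) :
    mu A ≤ mu B + 2 * hausdorffDist A B := by
  have hfin := hD_ne_top hA hB
  have h1 : ∀ n, muf A n ≤ muf B n + (2:ℝ)⁻¹ ^ n * hausdorffDist A B := by
    intro n
    have := infDist_le_infDist_add_hausdorffDist (x := denseSeq X n) (s := A) (t := B) hfin
    have h3 : (0:ℝ) ≤ (2:ℝ)⁻¹ ^ n := by positivity
    unfold muf
    have h4 : MM X - infDist (denseSeq X n) A ≤
        (MM X - infDist (denseSeq X n) B) + hausdorffDist A B := by linarith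
    calc (2:ℝ)⁻¹ ^ n * (MM X - infDist (denseSeq X n) A)
        ≤ (2:ℝ)⁻¹ ^ n * ((MM X - infDist (denseSeq X n) B) + hausdorffDist A B) :=
          mul_le_mul_of_nonneg_left h4 h3
      _ = (2:ℝ)⁻¹ ^ n * (MM X - infDist (denseSeq X n) B) + (2:ℝ)⁻¹ ^ n * hausdorffDist A B := by
          ring
  calc mu A ≤ ∑' n : ℕ, (muf B n + (2:ℝ)⁻¹ ^ n * hausdorffDist A B) :=
        Summable.tsum_le_tsum h1 (muf_summable hA)
          ((muf_summable hB).add (summable_geom_mul _))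
    _ = mu B + 2 * hausdorffDist A B := by
        rw [Summable.tsum_add (muf_summable hB) (summable_geom_mul _), tsum_geom_mul]; rfl

lemma mu_singleton_le (x y : X) : mu {x} ≤ mu {y} + 2 * dist x y := by
  have h := mu_le_hD (A := ({x} : Set X)) (B := {y}) ⟨x, rfl⟩ ⟨y, rfl⟩
  have hD : hausdorffDist ({x} : Set X) {y} ≤ dist x y := by
    refine hausdorffDist_le_of_infDist dist_nonneg ?_ ?_ <;> intro z hz <;>
      simp only [mem_singleton_iff] at hz <;> subst hz <;>
      rw [infDist_singleton] <;> simp [dist_comm]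
  linarith

lemma mu_singleton_lipschitz : LipschitzWith 2 (fun x : X => mu {x}) := by
  refine LipschitzWith.of_dist_le_mul (fun x y => ?_)
  have h1 := mu_singleton_le x y
  have h2 := mu_singleton_le y x
  rw [Real.dist_eq, dist_comm y x] at *
  rw [abs_le]; constructor <;> [skip; skip] <;> push_cast <;> linarith

noncomputable def gfun (x : X) (p : ℝ) : ℝ := mu {x} + p * (mu (univ : Set X) - mu {x})

lemma gfun_cont : Continuous (fun q : X × ℝ => gfun q.1 q.2) := by
  have h1 : Continuous (fun x : X => mu {x}) := mu_singleton_lipschitz.continuous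
  unfold gfun
  exact (h1.comp continuous_fst).add (continuous_snd.mul (continuous_const.sub (h1.comp continuous_fst)))

lemma mu_singleton_le_univ (x : X) : mu {x} ≤ mu (univ : Set X) :=
  mu_mono ⟨x, rfl⟩ (subset_univ _)

lemma gfun_self_le {x : X} {p : ℝ} (hp : 0 ≤ p) : mu {x} ≤ gfun x p := by
  have hle := mu_singleton_le_univ x
  have : 0 ≤ p * (mu (univ : Set X) - mu {x}) := mul_nonneg hp (by linarith)
  unfold gfun; linarith

/-! ### Hyperspace limit lemmas -/

lemma exists_subseq_conv (K : ℕ → Set X) (hc : ∀ n, IsCompact (K n))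
    (hne : ∀ n, (K n).Nonempty) :
    ∃ (K₀ : Set X) (φ : ℕ → ℕ), StrictMono φ ∧ IsCompact K₀ ∧ K₀.Nonempty ∧
      Tendsto (fun n => hausdorffDist (K (φ n)) K₀) atTop (𝓝 0) := by
  let Kc : ℕ → NonemptyCompacts X := fun n => ⟨⟨K n, hc n⟩, hne n⟩
  obtain ⟨L, -, φ, hφ, hconv⟩ := isCompact_univ.tendsto_subseq (x := Kc) (fun n => trivial)
  refine ⟨L, φ, hφ, L.isCompact', L.nonempty, ?_⟩
  exact tendsto_iff_dist_tendsto_zero.mp hconv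

lemma mem_of_hD_lim {K : ℕ → Set X} {K₀ : Set X} (h₀ : IsCompact K₀) (hne₀ : K₀.Nonempty)
    (hne : ∀ n, (K n).Nonempty)
    (hD : Tendsto (fun n => hausdorffDist (K n) K₀) atTop (𝓝 0))
    {z : ℕ → X} {z₀ : X} (hz : ∀ n, z n ∈ K n) (hzc : Tendsto z atTop (𝓝 z₀)) :
    z₀ ∈ K₀ := by
  have hb : ∀ n, infDist z₀ K₀ ≤ dist z₀ (z n) + hausdorffDist (K n) K₀ := by
    intro n
    have h1 : infDist (z n) K₀ ≤ hausdorffDist (K n) K₀ :=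
      infDist_le_hausdorffDist_of_mem (hz n) (hD_ne_top (hne n) hne₀)
    have h2 := infDist_le_infDist_add_dist (s := K₀) (x := z₀) (y := z n)
    linarith
  have hlim : Tendsto (fun n => dist z₀ (z n) + hausdorffDist (K n) K₀) atTop (𝓝 0) := by
    have h3 : Tendsto (fun n => dist z₀ (z n)) atTop (𝓝 0) :=
      tendsto_iff_dist_tendsto_zero.mp hzc |>.congr (fun n => dist_comm _ _)
    simpa using h3.add hD
  have : infDist z₀ K₀ ≤ 0 := ge_of_tendsto' hlim hb
  have h0 : infDist z₀ K₀ = 0 := le_antisymm this infDist_nonneg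
  rwa [← h₀.isClosed.closure_eq, mem_closure_iff_infDist_zero hne₀]

lemma preconn_of_hD_lim {K : ℕ → Set X} {K₀ : Set X} (h₀ : IsCompact K₀) (hne₀ : K₀.Nonempty)
    (hc : ∀ n, IsCompact (K n)) (hne : ∀ n, (K n).Nonempty)
    (hconn : ∀ n, IsPreconnected (K n))
    (hD : Tendsto (fun n => hausdorffDist (K n) K₀) atTop (𝓝 0)) :
    IsPreconnected K₀ := by
  rw [IsPreconnected]
  intro u v hu hv hcov ⟨a, haK, hau⟩ ⟨b, hbK, hbv⟩
  by_contra hcon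
  rw [not_nonempty_iff_eq_empty] at hcon
  set A : Set X := K₀ \ v with hA
  set B : Set X := K₀ \ u with hB
  have hAcl : IsClosed A := h₀.isClosed.sdiff hv
  have hBcl : IsClosed B := h₀.isClosed.sdiff hu
  have haA : a ∈ A := ⟨haK, fun hav => by
    have : a ∈ K₀ ∩ (u ∩ v) := ⟨haK, hau, hav⟩
    simp [hcon] at this⟩
  have hbB : b ∈ B := ⟨hbK, fun hbu => by
    have : b ∈ K₀ ∩ (u ∩ v) := ⟨hbK, hbu, hbv⟩
    simp [hcon] at this⟩
  have hcover : K₀ ⊆ A ∪ B := by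
    intro w hw
    rcases hcov hw with hwu | hwv
    · left; exact ⟨hw, fun hwv => by
        have : w ∈ K₀ ∩ (u ∩ v) := ⟨hw, hwu, hwv⟩
        simp [hcon] at this⟩
    · right; exact ⟨hw, fun hwu => by
        have : w ∈ K₀ ∩ (u ∩ v) := ⟨hw, hwu, hwv⟩
        simp [hcon] at this⟩
  -- positive separation between A and B
  obtain ⟨p₀, hp₀A, hp₀min'⟩ :=
    (h₀.of_isClosed_subset hAcl diff_subset).exists_isMinOn ⟨a, haA⟩
      (continuous_infDist_pt B).continuousOn
  have hp₀min : ∀ p ∈ A, infDist p₀ B ≤ infDist p B := fun p hp => hp₀min' hp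
  have hsep : 0 < infDist p₀ B := by
    rcases lt_or_eq_of_le (infDist_nonneg (s := B) (x := p₀)) with h | h
    · exact h
    · exfalso
      have : p₀ ∈ closure B := (mem_closure_iff_infDist_zero ⟨b, hbB⟩).mpr h.symm
      rw [hBcl.closure_eq] at this
      exact this.2 (by
        rcases hcov hp₀A.1 with h1 | h1
        · exact h1
        · exact absurd h1 hp₀A.2)
  set δ : ℝ := infDist p₀ B / 3 with hδ
  have hδpos : 0 < δ := by positivity
  have hball : ∀ p ∈ A, ∀ q ∈ B, δ + δ ≤ dist p q := by
    intro p hp q hq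
    have h1 := hp₀min p hp
    have h2 := infDist_le_dist_of_mem (x := p) hq
    linarith
  set P := thickening δ A
  set Q := thickening δ B
  have hPQ : P ∩ Q = ∅ := by
    rw [eq_empty_iff_forall_notMem]
    rintro w ⟨hwP, hwQ⟩
    obtain ⟨p, hp, hdp⟩ := mem_thickening_iff.mp hwP
    obtain ⟨q, hq, hdq⟩ := mem_thickening_iff.mp hwQ
    have := hball p hp q hq
    have := dist_triangle p w q
    rw [dist_comm p w] at this
    linarith
  obtain ⟨n, hn⟩ : ∃ n, hausdorffDist (K n) K₀ < δ := by
    have := hD.eventually (eventually_lt_nhds hδpos)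
    exact this.exists
  have hfin := hD_ne_top (hne n) hne₀
  have hsub : K n ⊆ P ∪ Q := by
    intro w hw
    obtain ⟨k, hk, hdk⟩ := exists_dist_lt_of_hausdorffDist_lt hw hn hfin
    rcases hcover hk with h1 | h1
    · exact Or.inl (mem_thickening_iff.mpr ⟨k, h1, hdk⟩)
    · exact Or.inr (mem_thickening_iff.mpr ⟨k, h1, hdk⟩)
  have hmeetP : (K n ∩ P).Nonempty := by
    obtain ⟨w, hw, hdw⟩ := exists_dist_lt_of_hausdorffDist_lt' (y := a) haK hn hfin
    exact ⟨w, hw, mem_thickening_iff.mpr ⟨a, haA, hdw⟩⟩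
  have hmeetQ : (K n ∩ Q).Nonempty := by
    obtain ⟨w, hw, hdw⟩ := exists_dist_lt_of_hausdorffDist_lt' (y := b) hbK hn hfin
    exact ⟨w, hw, mem_thickening_iff.mpr ⟨b, hbB, hdw⟩⟩
  obtain ⟨w, hwK, hwP, hwQ⟩ := hconn n P Q isOpen_thickening isOpen_thickening hsub hmeetP hmeetQ
  have : w ∈ P ∩ Q := ⟨hwP, hwQ⟩
  rw [hPQ] at this
  exact this

/-! ### The one-parameter field -/

noncomputable def NN (p : ℝ) (x : X) : Set X :=
  {z | ∃ K : Set X, IsCompact K ∧ IsPreconnected K ∧ x ∈ K ∧ z ∈ K ∧ mu K ≤ gfun x p}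

lemma self_mem_NN {p : ℝ} (hp : 0 ≤ p) (x : X) : x ∈ NN p x :=
  ⟨{x}, isCompact_singleton, isPreconnected_singleton, rfl, rfl, gfun_self_le hp⟩

lemma NN_nonempty {p : ℝ} (hp : 0 ≤ p) (x : X) : (NN p x).Nonempty :=
  ⟨x, self_mem_NN hp x⟩

lemma witness_subset_NN {p : ℝ} {x : X} {K : Set X} (hKc : IsCompact K)
    (hKp : IsPreconnected K) (hxK : x ∈ K) (hmu : mu K ≤ gfun x p) : K ⊆ NN p x :=
  fun w hw => ⟨K, hKc, hKp, hxK, hw, hmu⟩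

lemma NN_preconnected (p : ℝ) (x : X) : IsPreconnected (NN p x) := by
  refine isPreconnected_of_forall x (fun z hz => ?_)
  obtain ⟨K, hKc, hKp, hxK, hzK, hmu⟩ := hz
  exact ⟨K, witness_subset_NN hKc hKp hxK hmu, hxK, hzK, hKp⟩

lemma NN_zero (x : X) : NN 0 x = {x} := by
  apply Subset.antisymm
  · rintro z ⟨K, hKc, hKp, hxK, hzK, hmu⟩
    have hmu' : mu K ≤ mu {x} := by simpa [gfun] using hmu
    by_contra hzx
    have hKne : ({x} : Set X) ≠ K := by
      intro h
      exact hzx (by rw [← h] at hzK; exact hzK)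
    have := mu_lt (A := ({x} : Set X)) ⟨x, rfl⟩ isClosed_singleton
      (singleton_subset_iff.mpr hxK) hKc hKne
    linarith
  · rintro z rfl
    exact self_mem_NN le_rfl z

lemma NN_one [ConnectedSpace X] (x : X) : NN 1 x = univ := by
  refine eq_univ_of_forall (fun z => ?_)
  refine ⟨univ, isCompact_univ, isPreconnected_univ, trivial, trivial, ?_⟩
  unfold gfun; ring_nf; exact le_rfl

lemma NN_isClosed (p : ℝ) (x : X) : IsClosed (NN p x) := by
  refine IsSeqClosed.isClosed (fun z z₀ hz hzc => ?_)
  choose K hKc hKp hxK hzK hmu using hz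
  obtain ⟨K₀, φ, hφ, hK₀c, hK₀ne, hD⟩ := exists_subseq_conv K hKc (fun n => ⟨x, hxK n⟩)
  have hne : ∀ n, (K (φ n)).Nonempty := fun n => ⟨x, hxK (φ n)⟩
  refine ⟨K₀, hK₀c, ?_, ?_, ?_, ?_⟩
  · exact preconn_of_hD_lim hK₀c hK₀ne (fun n => hKc (φ n)) hne (fun n => hKp (φ n)) hD
  · exact mem_of_hD_lim hK₀c hK₀ne hne hD (fun n => hxK (φ n)) tendsto_const_nhds
  · exact mem_of_hD_lim hK₀c hK₀ne hne hD (fun n => hzK (φ n)) (hzc.comp hφ.tendsto_atTop)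
  · have hb : ∀ n, mu K₀ ≤ gfun x p + 2 * hausdorffDist (K (φ n)) K₀ := by
      intro n
      have h1 := mu_le_hD hK₀ne (hne n)
      have h2 : hausdorffDist K₀ (K (φ n)) = hausdorffDist (K (φ n)) K₀ := hausdorffDist_comm
      have h3 := hmu (φ n)
      rw [h2] at h1
      linarith
    have hlim : Tendsto (fun n => gfun x p + 2 * hausdorffDist (K (φ n)) K₀) atTop
        (𝓝 (gfun x p)) := by
      have := (hD.const_mul (2:ℝ)).const_add (gfun x p)
      simpa using this
    exact ge_of_tendsto' hlim hb

lemma NN_compact (p : ℝ) (x : X) : IsCompact (NN p x) := (NN_isClosed p x).isCompact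

/-! ### Boundary bumping -/

lemma bump {K : Set X} (hKc : IsCompact K) (hKp : IsPreconnected K) {x z : X}
    (hx : x ∈ K) (hz : z ∈ K) {t : ℝ} (ht : 0 < t) (htd : t < dist x z) :
    ∃ C : Set X, IsCompact C ∧ IsPreconnected C ∧ x ∈ C ∧ C ⊆ K ∧ z ∉ C ∧
      ∃ w ∈ C, dist w z ≤ t := by
  set V : Set X := {w | t < dist w z} with hV
  have hVopen : IsOpen V := isOpen_lt continuous_const (continuous_id.dist continuous_const)
  set U : Set X := K ∩ V with hU
  set F : Set X := closure U with hF
  have hFK : F ⊆ K := by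
    rw [hF, ← hKc.isClosed.closure_eq]
    exact closure_mono inter_subset_left
  have hFt : ∀ w ∈ F, t ≤ dist w z := by
    have hcl : IsClosed {w : X | t ≤ dist w z} :=
      isClosed_le continuous_const (continuous_id.dist continuous_const)
    intro w hw
    have : F ⊆ {w : X | t ≤ dist w z} := by
      rw [hF]
      exact closure_minimal (fun u hu => show t ≤ dist u z from le_of_lt hu.2) hcl
    exact this hw
  have hxU : x ∈ U := ⟨hx, htd⟩
  have hxF : x ∈ F := subset_closure hxU
  have hFcompact : IsCompact F := hKc.of_isClosed_subset isClosed_closure hFK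
  haveI : CompactSpace F := isCompact_iff_compactSpace.mp hFcompact
  set x' : F := ⟨x, hxF⟩ with hx'
  set C₀ : Set F := connectedComponent x' with hC₀
  set C : Set X := Subtype.val '' C₀ with hC
  have hC₀closed : IsClosed C₀ := isClosed_connectedComponent
  have hCcompact : IsCompact C := (hC₀closed.isCompact).image continuous_subtype_val
  have hCp : IsPreconnected C :=
    isPreconnected_connectedComponent.image _ continuous_subtype_val.continuousOn
  have hxC : x ∈ C := ⟨x', mem_connectedComponent, rfl⟩
  have hCK : C ⊆ K := by
    rintro w ⟨w', _, rfl⟩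
    exact hFK w'.2
  have hzC : z ∉ C := by
    intro hzC
    obtain ⟨w', -, hw'⟩ := hzC
    have h1 := hFt _ w'.2
    rw [hw'] at h1
    simp only [dist_self] at h1
    linarith
  refine ⟨C, hCcompact, hCp, hxC, hCK, hzC, ?_⟩
  by_contra hcon
  push_neg at hcon
  -- every point of C is at distance > t from z
  set S₀ : Set F := {w : F | dist (w : X) z ≤ t} with hS₀
  have hS₀closed : IsClosed S₀ :=
    isClosed_le ((continuous_subtype_val.dist continuous_const)) continuous_const
  have hS₀compact : IsCompact S₀ := hS₀closed.isCompact
  have hS₀C₀ : ∀ w ∈ S₀, w ∉ C₀ := by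
    intro w hw hwC₀
    exact absurd hw (not_le.mpr (hcon _ ⟨w, hwC₀, rfl⟩))
  have hiInter := connectedComponent_eq_iInter_isClopen x'
  have hcover : S₀ ⊆ ⋃ i : {s : Set F // IsClopen s ∧ x' ∈ s}, (↑i : Set F)ᶜ := by
    intro w hw
    have : w ∉ C₀ := hS₀C₀ w hw
    rw [hC₀, hiInter] at this
    simp only [mem_iInter, not_forall] at this
    obtain ⟨i, hi⟩ := this
    exact mem_iUnion.mpr ⟨i, hi⟩
  obtain ⟨T, hT⟩ := hS₀compact.elim_finite_subcover _ (fun i => i.2.1.compl.isOpen) hcover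
  set D₀ : Set F := ⋂ i ∈ T, (i : Set F) with hD₀
  have hD₀clopen : IsClopen D₀ := isClopen_biInter_finset (fun i _ => i.2.1)
  have hx'D₀ : x' ∈ D₀ := mem_iInter₂.mpr (fun i _ => i.2.2)
  have hD₀V : ∀ w ∈ D₀, t < dist (w : X) z := by
    intro w hw
    by_contra hwt
    have hwS₀ : w ∈ S₀ := not_lt.mp hwt
    obtain ⟨i, hiT, hwi⟩ := by
      have := hT hwS₀
      simpa only [mem_iUnion, exists_prop] using this
    exact hwi (mem_iInter₂.mp hw i hiT)
  set D : Set X := Subtype.val '' D₀ with hD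
  have hDcompact : IsCompact D := (hD₀clopen.1.isCompact).image continuous_subtype_val
  have hDclosed : IsClosed D := hDcompact.isClosed
  obtain ⟨O, hOopen, hOD⟩ : ∃ O : Set X, IsOpen O ∧ Subtype.val ⁻¹' O = D₀ := by
    simpa [isOpen_induced_iff] using hD₀clopen.2
  have hDOF : D = O ∩ F := by
    rw [hD, ← hOD, Subtype.image_preimage_coe]
    exact inter_comm _ _
  set W : Set X := O ∩ V with hW
  have hWopen : IsOpen W := hOopen.inter hVopen
  have hDWK : D = W ∩ K := by
    apply Subset.antisymm
    · intro w hw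
      have hwOF : w ∈ O ∩ F := hDOF ▸ hw
      obtain ⟨w', hw'D₀, rfl⟩ := hw
      exact ⟨⟨hwOF.1, hD₀V w' hw'D₀⟩, hFK w'.2⟩
    · rintro w ⟨⟨hwO, hwV⟩, hwK⟩
      have hwU : w ∈ U := ⟨hwK, hwV⟩
      have hwF : w ∈ F := subset_closure hwU
      rw [hDOF]
      exact ⟨hwO, hwF⟩
  have hzD : z ∉ D := by
    intro hzD
    have : z ∈ W ∩ K := hDWK ▸ hzD
    have : t < dist z z := this.1.2
    simp at this
    linarith
  have hxD : x ∈ D := ⟨x', hx'D₀, rfl⟩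
  have := hKp W Dᶜ hWopen hDclosed.isOpen_compl
    (fun w hw => by
      by_cases hwD : w ∈ D
      · exact Or.inl ((hDWK ▸ hwD).1)
      · exact Or.inr hwD)
    ⟨x, hx, (hDWK ▸ hxD).1⟩ ⟨z, hz, hzD⟩
  obtain ⟨w, hwK, hwW, hwDc⟩ := this
  exact hwDc (hDWK ▸ (⟨hwW, hwK⟩ : w ∈ W ∩ K))

/-! ### Uniform local connectedness -/

lemma unif_loc_conn [LocallyConnectedSpace X] {ε : ℝ} (hε : 0 < ε) :
    ∃ r > 0, ∀ x y : X, dist x y < r → ∃ K : Set X,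
      IsCompact K ∧ IsPreconnected K ∧ x ∈ K ∧ y ∈ K ∧ ∀ w ∈ K, dist x w ≤ ε := by
  have h := locallyConnectedSpace_iff_connected_subsets.mp ‹_›
  have hb : ∀ z : X, ball z (ε/3) ∈ 𝓝 z := fun z => ball_mem_nhds z (by linarith)
  choose V hVnhds hVconn hVsub using fun z : X => h z (ball z (ε/3)) (hb z)
  have hcov : (univ : Set X) ⊆ ⋃ z, interior (V z) := fun w _ =>
    mem_iUnion.mpr ⟨w, mem_interior_iff_mem_nhds.mpr (hVnhds w)⟩
  obtain ⟨δ, hδpos, hδ⟩ :=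
    lebesgue_number_lemma_of_metric isCompact_univ (fun z => isOpen_interior) hcov
  refine ⟨δ, hδpos, fun x y hxy => ?_⟩
  obtain ⟨i, hi⟩ := hδ x trivial
  have hxV : x ∈ V i := interior_subset (hi (mem_ball_self hδpos))
  have hyV : y ∈ V i := interior_subset (hi (by rwa [mem_ball, dist_comm]))
  refine ⟨closure (V i), isClosed_closure.isCompact, (hVconn i).closure,
    subset_closure hxV, subset_closure hyV, fun w hw => ?_⟩
  have hsub : closure (V i) ⊆ closedBall i (ε/3) :=
    le_trans (closure_mono (hVsub i)) closure_ball_subset_closedBall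
  have h1 : dist i w ≤ ε/3 := by have := hsub hw; rwa [mem_closedBall, dist_comm] at this
  have h2 : dist i x ≤ ε/3 := by
    have := hsub (subset_closure hxV); rwa [mem_closedBall, dist_comm] at this
  calc dist x w ≤ dist x i + dist i w := dist_triangle _ _ _
  _ ≤ ε/3 + ε/3 := by rw [dist_comm x i]; linarith
  _ ≤ ε := by linarith

/-! ### Neighborhood property -/

lemma NN_nbhd [LocallyConnectedSpace X] {p : ℝ} (hp : 0 < p) :
    ∃ r > 0, ∀ x : X, closedBall x r ⊆ NN p x := by
  by_cases hsub : Subsingleton X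
  · refine ⟨1, one_pos, fun x y hy => ?_⟩
    have : y = x := Subsingleton.elim y x
    exact this ▸ self_mem_NN hp.le x
  · have : Nontrivial X := not_subsingleton_iff_nontrivial.mp hsub
    obtain ⟨x₀, -, hx₀max'⟩ := isCompact_univ.exists_isMaxOn (univ_nonempty)
      ((mu_singleton_lipschitz (X := X)).continuous.continuousOn)
    have hx₀max : ∀ x : X, mu {x} ≤ mu {x₀} := fun x => hx₀max' (mem_univ x)
    have hc : 0 < mu (univ : Set X) - mu {x₀} := by
      obtain ⟨y, hy⟩ := exists_ne x₀
      have hne : ({x₀} : Set X) ≠ univ := by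
        intro h
        have : y ∈ ({x₀} : Set X) := h ▸ mem_univ y
        exact hy this
      have := mu_lt (A := ({x₀} : Set X)) ⟨x₀, rfl⟩ isClosed_singleton
        (subset_univ _) isCompact_univ hne
      linarith
    set c := mu (univ : Set X) - mu {x₀} with hcdef
    have hε : (0:ℝ) < p * c / 5 := by positivity
    obtain ⟨r, hrpos, hr⟩ := unif_loc_conn (X := X) hε
    refine ⟨r/2, by positivity, fun x y hy => ?_⟩
    have hxy : dist x y < r := by
      rw [mem_closedBall, dist_comm] at hy; linarith
    obtain ⟨K, hKc, hKp, hxK, hyK, hKd⟩ := hr x y hxy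
    have hKne : K.Nonempty := ⟨x, hxK⟩
    have hhd : hausdorffDist K {x} ≤ p * c / 5 := by
      refine hausdorffDist_le_of_infDist hε.le (fun w hw => ?_) (fun w hw => ?_)
      · rw [infDist_singleton, dist_comm]; exact hKd w hw
      · rcases hw with rfl
        rw [infDist_zero_of_mem hxK]; exact hε.le
    have hmuK : mu K ≤ mu {x} + 2 * (p * c / 5) := by
      have := mu_le_hD hKne (⟨x, rfl⟩ : ({x} : Set X).Nonempty)
      nlinarith
    have hgf : mu {x} + p * c ≤ gfun x p := by
      have h1 : c ≤ mu (univ : Set X) - mu {x} := by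
        have := hx₀max x; rw [hcdef]; linarith
      have h2 : p * c ≤ p * (mu (univ : Set X) - mu {x}) :=
        mul_le_mul_of_nonneg_left h1 hp.le
      unfold gfun; linarith
    exact witness_subset_NN hKc hKp hxK (by nlinarith) hyK

/-! ### Lower semicontinuity core -/

lemma NN_lsc [LocallyConnectedSpace X] {p : ℝ} (hp : p ∈ Icc (0:ℝ) 1) (x : X) {z : X}
    (hz : z ∈ NN p x) {η : ℝ} (hη : 0 < η) :
    ∃ δ > 0, ∀ q ∈ Icc (0:ℝ) 1, ∀ y : X, |p - q| < δ → dist x y < δ →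
      ∃ z' ∈ NN q y, dist z z' ≤ η := by
  by_cases hcase : dist x z ≤ η/2
  · refine ⟨η/2, by positivity, fun q hq y hpq hxy => ⟨y, self_mem_NN hq.1 y, ?_⟩⟩
    calc dist z y ≤ dist z x + dist x y := dist_triangle _ _ _
    _ ≤ η/2 + η/2 := by rw [dist_comm z x]; linarith
    _ = η := by ring
  · push_neg at hcase
    obtain ⟨K, hKc, hKp, hxK, hzK, hmu⟩ := hz
    obtain ⟨C, hCc, hCp, hxC, hCK, hzC, w, hwC, hwz⟩ :=
      bump hKc hKp hxK hzK (by positivity : (0:ℝ) < η/2) hcase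
    have hCK' : C ≠ K := fun h => hzC (h ▸ hzK)
    have hmuC : mu C < gfun x p :=
      lt_of_lt_of_le (mu_lt ⟨x, hxC⟩ hCc.isClosed hCK hKc hCK') hmu
    set ε₀ := gfun x p - mu C with hε₀def
    have hε₀ : 0 < ε₀ := by rw [hε₀def]; linarith
    obtain ⟨r, hrpos, hr⟩ := unif_loc_conn (X := X) (show (0:ℝ) < ε₀/8 by positivity)
    have hgC : ContinuousAt (fun q : X × ℝ => gfun q.1 q.2) (x, p) :=
      gfun_cont.continuousAt
    rw [Metric.continuousAt_iff] at hgC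
    obtain ⟨δ₁, hδ₁pos, hδ₁⟩ := hgC (ε₀/2) (by positivity)
    refine ⟨min δ₁ r, lt_min hδ₁pos hrpos, fun q hq y hpq hxy => ?_⟩
    obtain ⟨L, hLc, hLp, hxL, hyL, hLd⟩ := hr x y (lt_of_lt_of_le hxy (min_le_right _ _))
    have hgyq : gfun x p - ε₀/2 < gfun y q := by
      have hd : dist ((y, q) : X × ℝ) (x, p) < δ₁ := by
        rw [Prod.dist_eq]
        refine max_lt (by rw [dist_comm]; exact lt_of_lt_of_le hxy (min_le_left _ _)) ?_
        rw [Real.dist_eq, abs_sub_comm]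
        exact lt_of_lt_of_le hpq (min_le_left _ _)
      have := hδ₁ hd
      rw [Real.dist_eq, abs_lt] at this
      linarith [this.1]
    have hCLp : IsPreconnected (C ∪ L) := IsPreconnected.union x hxC hxL hCp hLp
    have hCLc : IsCompact (C ∪ L) := hCc.union hLc
    have hCLne : (C ∪ L).Nonempty := ⟨x, Or.inl hxC⟩
    have hhd : hausdorffDist (C ∪ L) C ≤ ε₀/8 := by
      refine hausdorffDist_le_of_infDist (by positivity) (fun a ha => ?_) (fun b hb => ?_)
      · rcases ha with ha | ha
        · rw [infDist_zero_of_mem ha]; positivity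
        · calc infDist a C ≤ dist a x := infDist_le_dist_of_mem hxC
          _ ≤ ε₀/8 := by rw [dist_comm a x]; exact hLd a ha
      · rw [infDist_zero_of_mem (show b ∈ C ∪ L from Or.inl hb)]; positivity
    have hmuCL : mu (C ∪ L) ≤ mu C + ε₀/4 := by
      have := mu_le_hD hCLne ⟨x, hxC⟩
      nlinarith
    have hlt : mu (C ∪ L) ≤ gfun y q := by
      have : gfun x p - ε₀/2 = mu C + ε₀/2 := by rw [hε₀def]; ring
      linarith
    refine ⟨w, witness_subset_NN hCLc hCLp (Or.inr hyL) hlt (Or.inl hwC), ?_⟩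
    rw [dist_comm]
    linarith

/-! ### Upper semicontinuity -/

lemma one_div_succ_tendsto : Tendsto (fun n : ℕ => 1/((n:ℝ)+1)) atTop (𝓝 0) :=
  tendsto_one_div_add_atTop_nhds_zero_nat

attribute [irreducible] gfun mu

lemma tendsto_gfun {y : ℕ → X} {q : ℕ → ℝ} {x : X} {p : ℝ}
    (hy : Tendsto y atTop (𝓝 x)) (hq : Tendsto q atTop (𝓝 p)) :
    Tendsto (fun n => gfun (y n) (q n)) atTop (𝓝 (gfun x p)) := by
  have hpair : Tendsto (fun n => ((y n, q n) : X × ℝ)) atTop (𝓝 (x, p)) := hy.prodMk_nhds hq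
  exact ((gfun_cont (X := X)).tendsto (x, p)).comp hpair

lemma NN_usc {p : ℝ} (hp : p ∈ Icc (0:ℝ) 1) (x : X) {η : ℝ} (hη : 0 < η) :
    ∃ δ > 0, ∀ q ∈ Icc (0:ℝ) 1, ∀ y : X, |p - q| < δ → dist x y < δ →
      ∀ z ∈ NN q y, infDist z (NN p x) ≤ η := by
  by_contra hcon
  push_neg at hcon
  have h' : ∀ n : ℕ, ∃ q ∈ Icc (0:ℝ) 1, ∃ y : X, |p - q| < 1/((n:ℝ)+1) ∧
      dist x y < 1/((n:ℝ)+1) ∧ ∃ z ∈ NN q y, η < infDist z (NN p x) := by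
    intro n
    have hpos : (0:ℝ) < 1/((n:ℝ)+1) := by positivity
    obtain ⟨q, hq, y, h1, h2, z, hz, h3⟩ := hcon (1/((n:ℝ)+1)) hpos
    exact ⟨q, hq, y, h1, h2, z, hz, h3⟩
  choose q hq y hpq hxy z hzNN hzfar using h'
  -- witnesses for z n ∈ NN (q n) (y n)
  have hw : ∀ n, ∃ K : Set X, IsCompact K ∧ IsPreconnected K ∧ y n ∈ K ∧ z n ∈ K ∧
      mu K ≤ gfun (y n) (q n) := fun n => hzNN n
  choose K hKc hKp hyK hzK hmuK using hw
  obtain ⟨K₀, φ, hφ, hK₀c, hK₀ne, hD⟩ := exists_subseq_conv K hKc (fun n => ⟨y n, hyK n⟩)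
  obtain ⟨z₀, -, ψ, hψ, hzconv⟩ :=
    isCompact_univ.tendsto_subseq (x := fun n => z (φ n)) (fun n => trivial)
  set θ : ℕ → ℕ := φ ∘ ψ with hθ
  have hθmono : StrictMono θ := hφ.comp hψ
  have hDθ : Tendsto (fun n => hausdorffDist (K (θ n)) K₀) atTop (𝓝 0) :=
    hD.comp hψ.tendsto_atTop
  have hne : ∀ n, (K (θ n)).Nonempty := fun n => ⟨y (θ n), hyK (θ n)⟩
  have hsmall : Tendsto (fun n => 1/((θ n : ℝ)+1)) atTop (𝓝 0) :=
    one_div_succ_tendsto.comp hθmono.tendsto_atTop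
  have hyconv : Tendsto (fun n => y (θ n)) atTop (𝓝 x) := by
    rw [tendsto_iff_dist_tendsto_zero]
    refine squeeze_zero (fun n => dist_nonneg) (fun n => ?_) hsmall
    rw [dist_comm]
    exact (hxy (θ n)).le
  have hqconv : Tendsto (fun n => q (θ n)) atTop (𝓝 p) := by
    rw [tendsto_iff_dist_tendsto_zero]
    refine squeeze_zero (fun n => dist_nonneg) (fun n => ?_) hsmall
    rw [Real.dist_eq, abs_sub_comm]
    exact (hpq (θ n)).le
  have hzθ : Tendsto (fun n => z (θ n)) atTop (𝓝 z₀) := hzconv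
  have hxK₀ : x ∈ K₀ := mem_of_hD_lim hK₀c hK₀ne hne hDθ (fun n => hyK (θ n)) hyconv
  have hzK₀ : z₀ ∈ K₀ := mem_of_hD_lim hK₀c hK₀ne hne hDθ (fun n => hzK (θ n)) hzθ
  have hK₀p : IsPreconnected K₀ :=
    preconn_of_hD_lim hK₀c hK₀ne (fun n => hKc (θ n)) hne (fun n => hKp (θ n)) hDθ
  have hgconv : Tendsto (fun n => gfun (y (θ n)) (q (θ n))) atTop (𝓝 (gfun x p)) :=
    tendsto_gfun hyconv hqconv
  have hmuK₀ : mu K₀ ≤ gfun x p := by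
    have hb : ∀ n, mu K₀ ≤ gfun (y (θ n)) (q (θ n)) + 2 * hausdorffDist (K (θ n)) K₀ := by
      intro n
      have h1 := mu_le_hD hK₀ne (hne n)
      have h2 : hausdorffDist K₀ (K (θ n)) = hausdorffDist (K (θ n)) K₀ := hausdorffDist_comm
      rw [h2] at h1
      have h3 := hmuK (θ n)
      linarith
    have hlim : Tendsto (fun n => gfun (y (θ n)) (q (θ n)) + 2 * hausdorffDist (K (θ n)) K₀)
        atTop (𝓝 (gfun x p)) := by
      have := hgconv.add ((hDθ.const_mul (2:ℝ)))
      simpa using this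
    exact ge_of_tendsto' hlim hb
  have hz₀mem : z₀ ∈ NN p x := ⟨K₀, hK₀c, hK₀p, hxK₀, hzK₀, hmuK₀⟩
  obtain ⟨n, hn⟩ : ∃ n, dist (z (θ n)) z₀ < η := by
    have := (tendsto_iff_dist_tendsto_zero.mp hzθ).eventually (eventually_lt_nhds hη)
    exact this.exists
  have : infDist (z (θ n)) (NN p x) ≤ dist (z (θ n)) z₀ :=
    infDist_le_dist_of_mem hz₀mem
  exact absurd (lt_of_le_of_lt this hn) (not_lt.mpr (hzfar (θ n)).le)

/-! ### Full continuity -/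

lemma NN_lsc_unif [LocallyConnectedSpace X] {p : ℝ} (hp : p ∈ Icc (0:ℝ) 1) (x : X) {η : ℝ}
    (hη : 0 < η) :
    ∃ δ > 0, ∀ q ∈ Icc (0:ℝ) 1, ∀ y : X, |p - q| < δ → dist x y < δ →
      ∀ z ∈ NN p x, infDist z (NN q y) ≤ η := by
  by_contra hcon
  push_neg at hcon
  have h' : ∀ n : ℕ, ∃ q ∈ Icc (0:ℝ) 1, ∃ y : X, |p - q| < 1/((n:ℝ)+1) ∧
      dist x y < 1/((n:ℝ)+1) ∧ ∃ z ∈ NN p x, η < infDist z (NN q y) := by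
    intro n
    have hpos : (0:ℝ) < 1/((n:ℝ)+1) := by positivity
    exact hcon (1/((n:ℝ)+1)) hpos
  choose q hq y hpq hxy z hzNN hzfar using h'
  obtain ⟨z₀, hz₀mem, ψ, hψ, hzconv⟩ :=
    (NN_compact p x).tendsto_subseq (x := z) hzNN
  obtain ⟨δ, hδpos, hδ⟩ := NN_lsc hp x hz₀mem (show (0:ℝ) < η/4 by positivity)
  have hsmall : Tendsto (fun n => 1/((ψ n : ℝ)+1)) atTop (𝓝 0) :=
    one_div_succ_tendsto.comp hψ.tendsto_atTop
  obtain ⟨n, hn1, hn2⟩ : ∃ n, 1/((ψ n : ℝ)+1) < δ ∧ dist (z (ψ n)) z₀ < η/4 := by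
    have e1 := hsmall.eventually (eventually_lt_nhds hδpos)
    have e2 := (tendsto_iff_dist_tendsto_zero.mp hzconv).eventually
      (eventually_lt_nhds (show (0:ℝ) < η/4 by positivity))
    exact (e1.and e2).exists
  obtain ⟨z', hz'NN, hz'd⟩ := hδ (q (ψ n)) (hq (ψ n)) (y (ψ n))
    (lt_trans (hpq (ψ n)) hn1) (lt_trans (hxy (ψ n)) hn1)
  have : infDist (z (ψ n)) (NN (q (ψ n)) (y (ψ n))) ≤ dist (z (ψ n)) z' := by
    exact infDist_le_dist_of_mem hz'NN
  have hd : dist (z (ψ n)) z' ≤ η/2 := by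
    calc dist (z (ψ n)) z' ≤ dist (z (ψ n)) z₀ + dist z₀ z' := dist_triangle _ _ _
    _ ≤ η/4 + η/4 := add_le_add hn2.le hz'd
    _ = η/2 := by ring
  have hfar := hzfar (ψ n)
  have := le_trans this hd
  linarith

lemma NN_cont [LocallyConnectedSpace X] {p : ℝ} (hp : p ∈ Icc (0:ℝ) 1) (x : X) {η : ℝ}
    (hη : 0 < η) :
    ∃ δ > 0, ∀ q ∈ Icc (0:ℝ) 1, ∀ y : X, |p - q| < δ → dist x y < δ →
      hausdorffDist (NN p x) (NN q y) < η := by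
  obtain ⟨δ₁, hδ₁pos, h1⟩ := NN_usc hp x (show (0:ℝ) < η/2 by positivity)
  obtain ⟨δ₂, hδ₂pos, h2⟩ := NN_lsc_unif hp x (show (0:ℝ) < η/2 by positivity)
  refine ⟨min δ₁ δ₂, lt_min hδ₁pos hδ₂pos, fun q hq y hpq hxy => ?_⟩
  have hle : hausdorffDist (NN p x) (NN q y) ≤ η/2 := by
    refine hausdorffDist_le_of_infDist (by positivity) ?_ ?_
    · intro a ha
      exact h2 q hq y (lt_of_lt_of_le hpq (min_le_right _ _))
        (lt_of_lt_of_le hxy (min_le_right _ _)) a ha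
    · intro b hb
      exact h1 q hq y (lt_of_lt_of_le hpq (min_le_left _ _))
        (lt_of_lt_of_le hxy (min_le_left _ _)) b hb
  linarith

end Stmt5P

/-- A compact metric space admits a one-parameter field of neighborhoods with connected
values if and only if it is a Peano continuum. -/
theorem stmt5 {X : Type u} [MetricSpace X] [CompactSpace X] [Nonempty X] :
    (∃ N : ℝ → X → Set X, IsOneParamNbhdField N ∧
        ∀ p ∈ Icc (0 : ℝ) 1, ∀ x : X, IsConnected (N p x)) ↔
      (ConnectedSpace X ∧ LocallyConnectedSpace X) := by
  constructor
  · rintro ⟨N, ⟨hcpt, hcont, hnbhd, hzero, hone⟩, hconn⟩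
    constructor
    · rw [connectedSpace_iff_univ]
      have x₀ : X := Classical.arbitrary X
      have h1 := hconn 1 ⟨zero_le_one, le_refl 1⟩ x₀
      rwa [hone x₀] at h1
    · rw [locallyConnectedSpace_iff_connected_subsets]
      intro x U hU
      obtain ⟨ε, hεpos, hball⟩ := Metric.mem_nhds_iff.mp hU
      obtain ⟨δ, hδpos, hδ⟩ := hcont 0 ⟨le_refl 0, zero_le_one⟩ x (ε/2) (by positivity)
      set q := min (δ/2) 1 with hqdef
      have hq0 : 0 < q := lt_min (by positivity) one_pos
      have hq1 : q ≤ 1 := min_le_right _ _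
      have hqIcc : q ∈ Icc (0:ℝ) 1 := ⟨hq0.le, hq1⟩
      have hqδ : |0 - q| < δ := by
        rw [zero_sub, abs_neg, abs_of_pos hq0]
        calc q ≤ δ/2 := min_le_left _ _
        _ < δ := by linarith
      have hHD := hδ q hqIcc x hqδ (by simpa using hδpos)
      rw [hzero x] at hHD
      have hne1 : (N q x).Nonempty := (hcpt q hqIcc x).2
      have hsub : N q x ⊆ ball x ε := by
        intro z hz
        have hfin := Stmt5P.hD_ne_top hne1 (⟨x, rfl⟩ : ({x} : Set X).Nonempty)
        have h1 : infDist z ({x} : Set X) ≤ hausdorffDist (N q x) ({x} : Set X) :=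
          infDist_le_hausdorffDist_of_mem hz hfin
        have h2 : hausdorffDist (N q x) ({x} : Set X) < ε/2 := by
          rw [hausdorffDist_comm]; exact hHD
        rw [infDist_singleton] at h1
        have : dist z x < ε := by linarith
        exact mem_ball.mpr this
      obtain ⟨-, r, hrpos, hr⟩ := hnbhd q ⟨hq0, hq1⟩
      refine ⟨N q x, ?_, (hconn q hqIcc x).2, hsub.trans hball⟩
      exact Filter.mem_of_superset (closedBall_mem_nhds x hrpos) (hr x)
  · rintro ⟨hC, hL⟩
    haveI := hC; haveI := hL
    refine ⟨Stmt5P.NN, ⟨?_, ?_, ?_, ?_, ?_⟩, ?_⟩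
    · exact fun p hp x => ⟨Stmt5P.NN_compact p x, Stmt5P.NN_nonempty hp.1 x⟩
    · exact fun p hp x η hη => Stmt5P.NN_cont hp x hη
    · intro p hp
      refine ⟨⟨fun x => Stmt5P.NN_compact p x, fun x => Stmt5P.self_mem_NN hp.1.le x, ?_⟩,
        Stmt5P.NN_nbhd hp.1⟩
      intro x ε hε
      obtain ⟨δ, hδpos, hδ⟩ := Stmt5P.NN_cont ⟨hp.1.le, hp.2⟩ x hε
      refine ⟨δ, hδpos, fun y hxy => ?_⟩
      intro z hz
      have hHD := hδ p ⟨hp.1.le, hp.2⟩ y (by simpa using hδpos) hxy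
      have hfin := Stmt5P.hD_ne_top (Stmt5P.NN_nonempty hp.1.le y)
        (Stmt5P.NN_nonempty hp.1.le x)
      have h1 : infDist z (Stmt5P.NN p x) ≤ hausdorffDist (Stmt5P.NN p y) (Stmt5P.NN p x) :=
        infDist_le_hausdorffDist_of_mem hz hfin
      have h2 : hausdorffDist (Stmt5P.NN p y) (Stmt5P.NN p x) < ε := by
        rw [hausdorffDist_comm]; exact hHD
      obtain ⟨w, hw, hweq⟩ := (Stmt5P.NN_compact p x).exists_infDist_eq_dist
        (Stmt5P.NN_nonempty hp.1.le x) z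
      have hzw : dist z w ≤ ε := by rw [← hweq]; linarith
      have : z ∈ ⋃ w ∈ Stmt5P.NN p x, closedBall w ε :=
        mem_iUnion₂.mpr ⟨w, hw, mem_closedBall.mpr hzw⟩
      exact this
    · exact fun x => Stmt5P.NN_zero x
    · exact fun x => Stmt5P.NN_one x
    · exact fun p hp x => ⟨Stmt5P.NN_nonempty hp.1 x, Stmt5P.NN_preconnected p x⟩
end
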